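/- arXiv:1206.6146 — 16 statements merged into one kernel-verified Lean document; each statement's English description precedes it below -/
import Mathlib

section
/- Let X be a real Banach space, let {(x_j, f_j)}_{j∈ℕ} be a Schauder frame of X, and let S : X → X* be a bounded linear operator with S(x_j) = f_j for all j (so S is a Hilbert-Schauder frame operator). Then S is self-adjoint, i.e., (S x)(y) = (S y)(x) for all x, y ∈ X. -/
open Filter Topology

/-- A Schauder frame of a real Banach space `X`: for every `v ∈ X`, the partial sums
`∑_{j < N} f j (v) • x j` converge to `v` in norm. -/
def SchauderFrame {X : Type*} [NormedAddCommGroup X] [NormedSpace ℝ X]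
    (x : ℕ → X) (f : ℕ → X →L[ℝ] ℝ) : Prop :=
  ∀ v : X, Tendsto (fun N => ∑ j ∈ Finset.range N, f j v • x j) atTop (𝓝 v)

/-- Every Hilbert-Schauder frame operator is self-adjoint. -/
theorem hsf_operator_self_adjoint
    {X : Type*} [NormedAddCommGroup X] [NormedSpace ℝ X] [CompleteSpace X]
    (x : ℕ → X) (f : ℕ → X →L[ℝ] ℝ) (hframe : SchauderFrame x f)
    (S : X →L[ℝ] X →L[ℝ] ℝ) (hS : ∀ j, S (x j) = f j) :
    ∀ v w : X, S v w = S w v := by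
  intro v w
  have key : ∀ u z : X, Tendsto (fun N => ∑ j ∈ Finset.range N, f j u * f j z)
      atTop (𝓝 (S u z)) := by
    intro u z
    have h1 : Tendsto (fun N => S (∑ j ∈ Finset.range N, f j u • x j) z)
        atTop (𝓝 (S u z)) := by
      have hc : Continuous fun y : X => S y z :=
        ((ContinuousLinearMap.apply ℝ ℝ z).comp S).continuous
      exact (hc.tendsto u).comp (hframe u)
    have heq : ∀ N, S (∑ j ∈ Finset.range N, f j u • x j) z
        = ∑ j ∈ Finset.range N, f j u * f j z := by
      intro N
      rw [map_sum]
      simp [hS, ContinuousLinearMap.smul_apply]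
    exact (funext heq : (fun N => S (∑ j ∈ Finset.range N, f j u • x j) z) = _) ▸ h1
  have h1 := key v w
  have h2 := key w v
  have h2' : Tendsto (fun N => ∑ j ∈ Finset.range N, f j v * f j w) atTop (𝓝 (S w v)) := by
    simpa [mul_comm] using h2
  exact tendsto_nhds_unique h1 h2'
end

section
/- Let X be a real Banach space, let {(x_j, f_j)}_{j∈ℕ} be a Schauder frame of X, and let S : X → X* be a bounded linear operator with S(x_j) = f_j for all j. Then for every x ∈ X the series Σ_j |f_j(x)|² converges and (S x)(x) = Σ_j |f_j(x)|² ≥ 0; in particular S is a positive operator. -/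
open Filter Topology

/-- For a Hilbert-Schauder frame operator `S`, for every `x` the series `∑ⱼ |fⱼ(x)|²`
converges with sum `(S x)(x)`, which is nonnegative; in particular `S` is positive. -/
theorem hsf_operator_positive
    {X : Type*} [NormedAddCommGroup X] [NormedSpace ℝ X] [CompleteSpace X]
    (x : ℕ → X) (f : ℕ → X →L[ℝ] ℝ) (hframe : SchauderFrame x f)
    (S : X →L[ℝ] X →L[ℝ] ℝ) (hS : ∀ j, S (x j) = f j) :
    ∀ v : X, HasSum (fun j => |f j v| ^ 2) (S v v) ∧ 0 ≤ S v v := by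
  intro v
  have hcont : Continuous fun w : X => S w v :=
    ((ContinuousLinearMap.apply ℝ ℝ v).comp S).continuous
  have htend : Tendsto (fun N => S (∑ j ∈ Finset.range N, f j v • x j) v) atTop (𝓝 (S v v)) :=
    (hcont.tendsto v).comp (hframe v)
  have heq : ∀ N, S (∑ j ∈ Finset.range N, f j v • x j) v
      = ∑ j ∈ Finset.range N, |f j v| ^ 2 := by
    intro N
    rw [map_sum]
    rw [ContinuousLinearMap.sum_apply]
    refine Finset.sum_congr rfl fun j _ => ?_
    simp [hS j, sq_abs, sq, mul_comm]
  have htend' : Tendsto (fun N => ∑ j ∈ Finset.range N, |f j v| ^ 2) atTop (𝓝 (S v v)) := by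
    simpa only [heq] using htend
  have hsum : HasSum (fun j => |f j v| ^ 2) (S v v) :=
    (hasSum_iff_tendsto_nat_of_nonneg (fun j => sq_nonneg _) _).2 htend'
  exact ⟨hsum, hsum.nonneg fun j => sq_nonneg _⟩
end

section
/- Let X be a real Banach space, let {(x_j, f_j)}_{j∈ℕ} be a Schauder frame of X, and let S : X → X* be a bounded linear operator with S(x_j) = f_j for all j. Then S is injective. -/
open Filter Topology

/-- Every Hilbert-Schauder frame operator is injective. -/
theorem hsf_operator_injective
    {X : Type*} [NormedAddCommGroup X] [NormedSpace ℝ X] [CompleteSpace X]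
    (x : ℕ → X) (f : ℕ → X →L[ℝ] ℝ) (hframe : SchauderFrame x f)
    (S : X →L[ℝ] X →L[ℝ] ℝ) (hS : ∀ j, S (x j) = f j) :
    Function.Injective S := by
  have key : ∀ v : X, S v = 0 → v = 0 := by
    intro v hv
    -- partial sums of squares tend to (S v) v = 0
    have h2 : Tendsto (fun N => (S (∑ j ∈ Finset.range N, f j v • x j)) v)
        atTop (𝓝 ((S v) v)) := by
      have hc : Continuous fun w : X => (S w) v :=
        (ContinuousLinearMap.apply ℝ ℝ v).continuous.comp S.continuous
      exact (hc.tendsto v).comp (hframe v)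
    have heq : ∀ N, (S (∑ j ∈ Finset.range N, f j v • x j)) v
        = ∑ j ∈ Finset.range N, (f j v) ^ 2 := by
      intro N
      rw [map_sum]
      simp [hS, ContinuousLinearMap.sum_apply, sq, mul_comm]
    have h1 : Tendsto (fun N => ∑ j ∈ Finset.range N, (f j v) ^ 2) atTop (𝓝 0) := by
      have : (S v) v = 0 := by rw [hv]; rfl
      rw [← this]
      exact h2.congr heq
    have hmono : Monotone fun N => ∑ j ∈ Finset.range N, (f j v) ^ 2 := by
      intro a b hab
      exact Finset.sum_le_sum_of_subset_of_nonneg (Finset.range_subset_range.2 hab)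
        (fun i _ _ => sq_nonneg _)
    have hle : ∀ N, ∑ j ∈ Finset.range N, (f j v) ^ 2 ≤ 0 :=
      fun N => hmono.ge_of_tendsto h1 N
    have hfz : ∀ j, f j v = 0 := by
      intro j
      have h3 : (f j v) ^ 2 ≤ ∑ i ∈ Finset.range (j + 1), (f i v) ^ 2 :=
        Finset.single_le_sum (fun i _ => sq_nonneg (f i v))
          (Finset.self_mem_range_succ j)
      have := le_trans h3 (hle (j + 1))
      nlinarith [sq_nonneg (f j v)]
    have h0 : Tendsto (fun N => ∑ j ∈ Finset.range N, f j v • x j) atTop (𝓝 (0 : X)) := by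
      have : ∀ N, ∑ j ∈ Finset.range N, f j v • x j = 0 := by
        intro N; simp [hfz]
      simpa [this] using tendsto_const_nhds (α := ℕ) (x := (0 : X))
    exact tendsto_nhds_unique (hframe v) h0
  intro a b hab
  have : a - b = 0 := key (a - b) (by rw [map_sub, hab, sub_self])
  exact sub_eq_zero.mp this
end

section
/- Let X be a real Banach space and let {(x_j, f_j)}_{j∈ℕ} be a Hilbert-Schauder frame of X with Hilbert-Schauder frame operator S. Then Σ_{j∈ℕ} |f_j(x)|² ≤ ‖S‖ · ‖x‖² for all x ∈ X (in particular the series on the left converges). -/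
open Filter Topology

/-- For a Hilbert-Schauder frame with HSf-operator `S`,
`∑ⱼ |fⱼ(x)|² ≤ ‖S‖ ‖x‖²` for all `x` (in particular the series converges). -/
theorem hsf_frame_upper_bound
    {X : Type*} [NormedAddCommGroup X] [NormedSpace ℝ X] [CompleteSpace X]
    (x : ℕ → X) (f : ℕ → X →L[ℝ] ℝ) (hframe : SchauderFrame x f)
    (S : X →L[ℝ] X →L[ℝ] ℝ) (hS : ∀ j, S (x j) = f j) :
    ∀ v : X, Summable (fun j => |f j v| ^ 2) ∧
      ∑' j, |f j v| ^ 2 ≤ ‖S‖ * ‖v‖ ^ 2 := by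
  intro v
  have hcont : Continuous fun u : X => S u v := by
    exact (ContinuousLinearMap.apply ℝ ℝ v).continuous.comp S.continuous
  have hPt : Tendsto (fun N => S (∑ j ∈ Finset.range N, f j v • x j) v) atTop (𝓝 (S v v)) :=
    (hcont.tendsto v).comp (hframe v)
  have heq : ∀ N, S (∑ j ∈ Finset.range N, f j v • x j) v
      = ∑ j ∈ Finset.range N, |f j v| ^ 2 := by
    intro N
    rw [map_sum, ContinuousLinearMap.sum_apply]
    refine Finset.sum_congr rfl fun j _ => ?_
    rw [map_smul, ContinuousLinearMap.smul_apply, hS, smul_eq_mul, sq_abs, sq]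
  have hgt : Tendsto (fun N => ∑ j ∈ Finset.range N, |f j v| ^ 2) atTop (𝓝 (S v v)) := by
    exact hPt.congr heq
  have hmono : Monotone fun N => ∑ j ∈ Finset.range N, |f j v| ^ 2 :=
    monotone_nat_of_le_succ fun n => by
      rw [Finset.sum_range_succ]
      nlinarith [sq_nonneg (|f n v|)]
  have hbound : ∀ N, ∑ j ∈ Finset.range N, |f j v| ^ 2 ≤ S v v :=
    fun N => hmono.ge_of_tendsto hgt N
  have hLle : S v v ≤ ‖S‖ * ‖v‖ ^ 2 := by
    have h1 : S v v ≤ ‖S v v‖ := le_abs_self _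
    have h2 : ‖S v v‖ ≤ ‖S v‖ * ‖v‖ := (S v).le_opNorm v
    have h3 : ‖S v‖ ≤ ‖S‖ * ‖v‖ := S.le_opNorm v
    have : S v v ≤ ‖S‖ * ‖v‖ * ‖v‖ := by
      calc S v v ≤ ‖S v‖ * ‖v‖ := h1.trans h2
        _ ≤ ‖S‖ * ‖v‖ * ‖v‖ := by
            have := norm_nonneg v
            nlinarith
    nlinarith
  have hsum : Summable (fun j => |f j v| ^ 2) :=
    summable_of_sum_range_le (fun j => sq_nonneg _) hbound
  exact ⟨hsum, (Summable.tsum_le_of_sum_range_le hsum hbound).trans hLle⟩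
end

section
/- Let X be a real Banach space and let {(x_j, f_j)}_{j∈ℕ} be a Hilbert-Schauder frame of X with Hilbert-Schauder frame operator S. Then there exists a bounded linear operator A : X → ℓ²(ℕ, ℝ) (the Hilbert-Schauder analysis operator) such that (A x)_j = f_j(x) for all x ∈ X and all j ∈ ℕ, and ‖A‖ ≤ ‖S‖^{1/2}. -/
open Filter Topology

/-- The Hilbert-Schauder analysis operator: for a Hilbert-Schauder frame with
HSf-operator `S`, there is a bounded linear operator `A : X → ℓ²` with
`(A x)ⱼ = fⱼ(x)` and `‖A‖ ≤ √‖S‖`. -/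
theorem hs_analysis_operator_exists
    {X : Type*} [NormedAddCommGroup X] [NormedSpace ℝ X] [CompleteSpace X]
    (x : ℕ → X) (f : ℕ → X →L[ℝ] ℝ) (hframe : SchauderFrame x f)
    (S : X →L[ℝ] X →L[ℝ] ℝ) (hS : ∀ j, S (x j) = f j) :
    ∃ A : X →L[ℝ] lp (fun _ : ℕ => ℝ) 2,
      (∀ (v : X) (j : ℕ), (A v : ∀ _ : ℕ, ℝ) j = f j v) ∧ ‖A‖ ≤ Real.sqrt ‖S‖ := by
  have hid : ∀ (v : X) (N : ℕ),
      ∑ j ∈ Finset.range N, ‖f j v‖ ^ (2:ℝ) =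
        S (∑ j ∈ Finset.range N, f j v • x j) v := by
    intro v N
    rw [map_sum]
    simp only [ContinuousLinearMap.coe_sum', Finset.sum_apply]
    refine Finset.sum_congr rfl fun j _ => ?_
    rw [map_smul, hS j]
    have : ‖f j v‖ ^ (2:ℝ) = (f j v) * (f j v) := by
      rw [show ((2:ℝ)) = ((2:ℕ):ℝ) by norm_num, Real.rpow_natCast,
        Real.norm_eq_abs, sq_abs, sq]
    simpa [ContinuousLinearMap.smul_apply, smul_eq_mul] using this
  have htend : ∀ v : X,
      Tendsto (fun N => ∑ j ∈ Finset.range N, ‖f j v‖ ^ (2:ℝ)) atTop (𝓝 (S v v)) := by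
    intro v
    simp only [hid]
    exact ((ContinuousLinearMap.apply ℝ ℝ v).continuous.tendsto _).comp
      ((S.continuous.tendsto v).comp (hframe v))
  have hSvv : ∀ v : X, S v v ≤ ‖S‖ * ‖v‖ ^ 2 := by
    intro v
    calc S v v ≤ ‖S v v‖ := le_abs_self _
    _ ≤ ‖S v‖ * ‖v‖ := (S v).le_opNorm v
    _ ≤ (‖S‖ * ‖v‖) * ‖v‖ := by
        exact mul_le_mul_of_nonneg_right (S.le_opNorm v) (norm_nonneg v)
    _ = ‖S‖ * ‖v‖ ^ 2 := by ring
  have hbound : ∀ (v : X) (N : ℕ),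
      ∑ j ∈ Finset.range N, ‖f j v‖ ^ (2:ℝ) ≤ ‖S‖ * ‖v‖ ^ 2 := by
    intro v N
    have hmono : Monotone (fun N => ∑ j ∈ Finset.range N, ‖f j v‖ ^ (2:ℝ)) := by
      intro a b hab
      exact Finset.sum_le_sum_of_subset_of_nonneg (Finset.range_subset_range.2 hab)
        (fun i _ _ => Real.rpow_nonneg (norm_nonneg _) _)
    exact (hmono.ge_of_tendsto (htend v) N).trans (hSvv v)
  have hsum : ∀ (v : X) (s : Finset ℕ),
      ∑ j ∈ s, ‖f j v‖ ^ ((2:ENNReal).toReal) ≤ ‖S‖ * ‖v‖ ^ 2 := by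
    intro v s
    have : (2:ENNReal).toReal = (2:ℝ) := by norm_num
    rw [this]
    calc ∑ j ∈ s, ‖f j v‖ ^ (2:ℝ)
        ≤ ∑ j ∈ Finset.range (s.sup id + 1), ‖f j v‖ ^ (2:ℝ) := by
          refine Finset.sum_le_sum_of_subset_of_nonneg (fun i hi => ?_)
            (fun i _ _ => Real.rpow_nonneg (norm_nonneg _) _)
          exact Finset.mem_range.2 (Nat.lt_succ_of_le (Finset.le_sup (f := id) hi))
      _ ≤ ‖S‖ * ‖v‖ ^ 2 := hbound v _
  have hmem : ∀ v : X, Memℓp (fun j => f j v) (2:ENNReal) :=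
    fun v => memℓp_gen' (hsum v)
  set L : X →ₗ[ℝ] lp (fun _ : ℕ => ℝ) 2 :=
    { toFun := fun v => ⟨fun j => f j v, hmem v⟩
      map_add' := by intro u w; ext j; simp; rfl
      map_smul' := by intro c u; ext j; simp }
  have hLnorm : ∀ v : X, ‖L v‖ ≤ Real.sqrt ‖S‖ * ‖v‖ := by
    intro v
    refine lp.norm_le_of_forall_sum_le (by norm_num)
      (mul_nonneg (Real.sqrt_nonneg _) (norm_nonneg _)) (fun s => ?_)
    have hC : (Real.sqrt ‖S‖ * ‖v‖) ^ ((2:ENNReal).toReal) = ‖S‖ * ‖v‖ ^ 2 := by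
      have : (2:ENNReal).toReal = ((2:ℕ):ℝ) := by norm_num
      rw [this, Real.rpow_natCast, mul_pow, Real.sq_sqrt (norm_nonneg S)]
    rw [hC]
    exact hsum v s
  refine ⟨L.mkContinuous (Real.sqrt ‖S‖) hLnorm, fun v j => rfl,
    L.mkContinuous_norm_le (Real.sqrt_nonneg _) hLnorm⟩
end

section
/- Let X be a real Banach space and let {(x_j, f_j)}_{j∈ℕ} be a Hilbert-Schauder frame of X with Hilbert-Schauder frame operator S, and let A : X → ℓ²(ℕ, ℝ) be the bounded linear operator with (A x)_j = f_j(x). Then S = A* ∘ A in the sense that for all x, y ∈ X, (S x)(y) = ⟨A x, A y⟩_{ℓ²} = Σ_j f_j(x) f_j(y); in particular the Hilbert-Schauder frame operator S factors through the Hilbert space ℓ²(ℕ, ℝ). -/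
open Filter Topology
open scoped RealInnerProductSpace

/-- The HSf-operator factors through `ℓ²`: `S = A* A`, i.e.
`(S x)(y) = ⟨A x, A y⟩ = ∑ⱼ fⱼ(x) fⱼ(y)`. -/
theorem hsf_operator_factors
    {X : Type*} [NormedAddCommGroup X] [NormedSpace ℝ X] [CompleteSpace X]
    (x : ℕ → X) (f : ℕ → X →L[ℝ] ℝ) (hframe : SchauderFrame x f)
    (S : X →L[ℝ] X →L[ℝ] ℝ) (hS : ∀ j, S (x j) = f j)
    (A : X →L[ℝ] lp (fun _ : ℕ => ℝ) 2)
    (hA : ∀ (v : X) (j : ℕ), (A v : ∀ _ : ℕ, ℝ) j = f j v) :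
    ∀ v w : X, S v w = ⟪A v, A w⟫ ∧ HasSum (fun j => f j v * f j w) (S v w) := by
  intro v w
  -- inner product of lp elements has sum
  have hinner : HasSum (fun j => f j v * f j w) ⟪A v, A w⟫ := by
    have := lp.hasSum_inner (𝕜 := ℝ) (A v) (A w)
    simpa [hA, real_inner_comm, mul_comm] using this
  -- partial sums tend to S v w
  have h1 : Tendsto (fun N => ∑ j ∈ Finset.range N, f j v * f j w) atTop (𝓝 (S v w)) := by
    have hc : Continuous fun u : X => S u w :=
      (ContinuousLinearMap.apply ℝ ℝ w).comp S |>.continuous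
    have := (hc.tendsto v).comp (hframe v)
    simpa [Function.comp_def, map_sum, map_smul, hS, ContinuousLinearMap.sum_apply, ContinuousLinearMap.smul_apply, smul_eq_mul] using this
  have h2 : Tendsto (fun N => ∑ j ∈ Finset.range N, f j v * f j w) atTop (𝓝 (⟪A v, A w⟫)) :=
    hinner.tendsto_sum_nat
  have heq : S v w = ⟪A v, A w⟫ := tendsto_nhds_unique h1 h2
  exact ⟨heq, heq ▸ hinner⟩
end

section
/- Let X be a real Banach space. Suppose {(x_j, f_{1,j})}_{j∈ℕ} and {(x_j, f_{2,j})}_{j∈ℕ} (with the same first components x_j) are both Hilbert-Schauder frames of X, with Hilbert-Schauder frame operators S₁ and S₂ respectively. Then S₁ = S₂ and f_{1,j} = f_{2,j} for all j ∈ ℕ. -/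
open Filter Topology

lemma hsf_key {X : Type*} [NormedAddCommGroup X] [NormedSpace ℝ X]
    (S : X →L[ℝ] X →L[ℝ] ℝ) (x : ℕ → X) (g : ℕ → X →L[ℝ] ℝ)
    (hS : ∀ j, S (x j) = g j) (c : ℕ → ℝ) (v w : X)
    (hv : Tendsto (fun N => ∑ j ∈ Finset.range N, c j • x j) atTop (𝓝 v)) :
    Tendsto (fun N => ∑ j ∈ Finset.range N, c j * g j w) atTop (𝓝 (S v w)) := by
  have h := ((S.flip w).continuous.tendsto v).comp hv
  have : (fun N => (S.flip w) (∑ j ∈ Finset.range N, c j • x j))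
      = fun N => ∑ j ∈ Finset.range N, c j * g j w := by
    funext N
    simp [map_sum, ContinuousLinearMap.flip_apply, hS, smul_eq_mul]
  rw [show (S.flip w) v = S v w from rfl] at h
  simpa [Function.comp_def, hS, this] using h

/-- If two Hilbert-Schauder frames share the same vectors `xⱼ`, then their
HSf-operators coincide and the functionals coincide. -/
theorem hsf_frame_unique_functionals
    {X : Type*} [NormedAddCommGroup X] [NormedSpace ℝ X] [CompleteSpace X]
    (x : ℕ → X) (f₁ f₂ : ℕ → X →L[ℝ] ℝ)
    (hframe₁ : SchauderFrame x f₁) (hframe₂ : SchauderFrame x f₂)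
    (S₁ S₂ : X →L[ℝ] X →L[ℝ] ℝ)
    (hS₁ : ∀ j, S₁ (x j) = f₁ j) (hS₂ : ∀ j, S₂ (x j) = f₂ j) :
    S₁ = S₂ ∧ ∀ j, f₁ j = f₂ j := by
  have sym₂ : ∀ v w : X, S₂ v w = S₂ w v := by
    intro v w
    have h1 := hsf_key S₂ x f₂ hS₂ (fun j => f₂ j v) v w (hframe₂ v)
    have h2 := hsf_key S₂ x f₂ hS₂ (fun j => f₂ j w) w v (hframe₂ w)
    have h2' : Tendsto (fun N => ∑ j ∈ Finset.range N, f₂ j v * f₂ j w) atTop (𝓝 (S₂ w v)) := by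
      simpa [mul_comm] using h2
    exact tendsto_nhds_unique h1 h2'
  have hmain : S₁ = S₂ := by
    ext v w
    have h1 := hsf_key S₁ x f₁ hS₁ (fun j => f₂ j v) v w (hframe₂ v)
    have h2 := hsf_key S₂ x f₂ hS₂ (fun j => f₁ j w) w v (hframe₁ w)
    have h2' : Tendsto (fun N => ∑ j ∈ Finset.range N, f₂ j v * f₁ j w) atTop (𝓝 (S₂ w v)) := by
      simpa [mul_comm] using h2
    have : S₁ v w = S₂ w v := tendsto_nhds_unique h1 h2'
    rw [this, sym₂]
  refine ⟨hmain, fun j => ?_⟩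
  rw [← hS₁ j, ← hS₂ j, hmain]
end

section
/- Let X be a real Banach space. Suppose {(x_{1,j}, f_j)}_{j∈ℕ} and {(x_{2,j}, f_j)}_{j∈ℕ} (with the same second components f_j) are both Hilbert-Schauder frames of X, with Hilbert-Schauder frame operators S₁ and S₂ respectively. Then S₁ = S₂ and x_{1,j} = x_{2,j} for all j ∈ ℕ. -/
open Filter Topology

/-- If two Hilbert-Schauder frames share the same functionals `fⱼ`, then their
HSf-operators coincide and the vectors coincide. -/
theorem hsf_frame_unique_vectors
    {X : Type*} [NormedAddCommGroup X] [NormedSpace ℝ X] [CompleteSpace X]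
    (x₁ x₂ : ℕ → X) (f : ℕ → X →L[ℝ] ℝ)
    (hframe₁ : SchauderFrame x₁ f) (hframe₂ : SchauderFrame x₂ f)
    (S₁ S₂ : X →L[ℝ] X →L[ℝ] ℝ)
    (hS₁ : ∀ j, S₁ (x₁ j) = f j) (hS₂ : ∀ j, S₂ (x₂ j) = f j) :
    S₁ = S₂ ∧ ∀ j, x₁ j = x₂ j := by
  -- S₁ v is the limit of ∑ f j v • f j
  have h1 : ∀ v : X, Tendsto (fun N => ∑ j ∈ Finset.range N, f j v • f j) atTop (𝓝 (S₁ v)) := by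
    intro v
    have := (S₁.continuous.tendsto v).comp (hframe₁ v)
    simpa [Function.comp_def, map_sum, map_smul, hS₁] using this
  have h2 : ∀ v : X, Tendsto (fun N => ∑ j ∈ Finset.range N, f j v • f j) atTop (𝓝 (S₂ v)) := by
    intro v
    have := (S₂.continuous.tendsto v).comp (hframe₂ v)
    simpa [Function.comp_def, map_sum, map_smul, hS₂] using this
  have hSeq : S₁ = S₂ := by
    ext v u
    exact DFunLike.congr_fun (tendsto_nhds_unique (h1 v) (h2 v)) u
  -- symmetry of S₁
  have hsymm : ∀ v u : X, S₁ v u = S₁ u v := by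
    intro v u
    have hv : Tendsto (fun N => ∑ j ∈ Finset.range N, f j v * f j u) atTop (𝓝 (S₁ v u)) := by
      have := ((ContinuousLinearMap.apply ℝ ℝ u).continuous.tendsto (S₁ v)).comp (h1 v)
      simpa [Function.comp_def, smul_eq_mul] using this
    have hu : Tendsto (fun N => ∑ j ∈ Finset.range N, f j v * f j u) atTop (𝓝 (S₁ u v)) := by
      have := ((ContinuousLinearMap.apply ℝ ℝ v).continuous.tendsto (S₁ u)).comp (h1 u)
      simpa [Function.comp_def, smul_eq_mul, mul_comm] using this
    exact tendsto_nhds_unique hv hu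
  refine ⟨hSeq, fun j => ?_⟩
  set u := x₁ j - x₂ j with hu
  have hSu : S₁ u = 0 := by
    rw [hu, map_sub, hS₁ j, hSeq, hS₂ j, sub_self]
  have hfu : ∀ k, f k u = 0 := by
    intro k
    have : f k u = S₁ u (x₁ k) := by rw [← hS₁ k, hsymm]
    rw [this, hSu]
    rfl
  have h0 : Tendsto (fun N : ℕ => (0 : X)) atTop (𝓝 u) := by
    have := hframe₁ u
    simpa [hfu] using this
  have : u = 0 := tendsto_nhds_unique h0 tendsto_const_nhds
  exact sub_eq_zero.mp this
end

section
/- Let X be a real Banach space and let {(x_n, f_n)}_{n∈ℕ} be a Hilbert-Schauder frame of X with Hilbert-Schauder frame operator S. Then for every n ∈ ℕ, the partial sums Σ_{j≤N} f_n(x_j) f_j converge in the norm of X* to f_n, i.e., f_n = Σ_j f_n(x_j) f_j. -/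
open Filter Topology

/-- The HSf-operator expands as `S u v = lim_N ∑_{j<N} f j u * f j v`. -/
lemma hsf_expand {X : Type*} [NormedAddCommGroup X] [NormedSpace ℝ X]
    (x : ℕ → X) (f : ℕ → X →L[ℝ] ℝ) (hframe : SchauderFrame x f)
    (S : X →L[ℝ] X →L[ℝ] ℝ) (hS : ∀ j, S (x j) = f j) (u v : X) :
    Tendsto (fun N => ∑ j ∈ Finset.range N, f j u * f j v) atTop (𝓝 (S u v)) := by
  have h1 : Tendsto (fun N => S (∑ j ∈ Finset.range N, f j u • x j)) atTop (𝓝 (S u)) :=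
    (S.continuous.tendsto u).comp (hframe u)
  have h2 : Tendsto (fun N => S (∑ j ∈ Finset.range N, f j u • x j) v) atTop (𝓝 (S u v)) :=
    ((ContinuousLinearMap.apply ℝ ℝ v).continuous.tendsto (S u)).comp h1
  convert h2 using 2 with N
  simp [map_sum, hS, mul_comm]

/-- The HSf-operator is symmetric. -/
lemma hsf_symm {X : Type*} [NormedAddCommGroup X] [NormedSpace ℝ X]
    (x : ℕ → X) (f : ℕ → X →L[ℝ] ℝ) (hframe : SchauderFrame x f)
    (S : X →L[ℝ] X →L[ℝ] ℝ) (hS : ∀ j, S (x j) = f j) (u v : X) :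
    S u v = S v u := by
  have h1 := hsf_expand x f hframe S hS u v
  have h2 := hsf_expand x f hframe S hS v u
  simp_rw [mul_comm (f _ v) (f _ u)] at h2
  exact tendsto_nhds_unique h1 h2

/-- For a Hilbert-Schauder frame, each functional `fₙ` is reconstructed by the frame:
the partial sums `∑_{j<N} fₙ(xⱼ) fⱼ` converge to `fₙ` in the norm of `X*`. -/
theorem hsf_frame_functional_reconstruction
    {X : Type*} [NormedAddCommGroup X] [NormedSpace ℝ X] [CompleteSpace X]
    (x : ℕ → X) (f : ℕ → X →L[ℝ] ℝ) (hframe : SchauderFrame x f)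
    (S : X →L[ℝ] X →L[ℝ] ℝ) (hS : ∀ j, S (x j) = f j) :
    ∀ n : ℕ, Tendsto (fun N => ∑ j ∈ Finset.range N, f n (x j) • f j)
      atTop (𝓝 (f n)) := by
  intro n
  have hsym : ∀ j, f n (x j) = f j (x n) := by
    intro j
    rw [← hS n, ← hS j, hsf_symm x f hframe S hS]
  have h1 : Tendsto (fun N => S (∑ j ∈ Finset.range N, f j (x n) • x j)) atTop (𝓝 (S (x n))) :=
    (S.continuous.tendsto (x n)).comp (hframe (x n))
  rw [hS n] at h1
  convert h1 using 2 with N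
  simp [map_sum, hS, hsym]
end

section
/- Let X be a real Banach space and let {(x_n, f_n)}_{n∈ℕ} be a Hilbert-Schauder frame of X with Hilbert-Schauder frame operator S. Then {(f_n, x_n)}_{n∈ℕ} is a Schauder frame of the norm-closed linear span Y of {f_n : n ∈ ℕ} in X*: for every f ∈ Y, the partial sums Σ_{j≤N} f(x_j) f_j converge in the norm of X* to f (here x_j acts on X* by evaluation, f ↦ f(x_j)). -/
open Filter Topology

/-- For a Hilbert-Schauder frame `{(xₙ, fₙ)}` of `X`, the swapped system `{(fₙ, xₙ)}`
is a Schauder frame of the norm-closed linear span of `{fₙ}` in `X*`. -/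
theorem hsf_frame_dual_frame
    {X : Type*} [NormedAddCommGroup X] [NormedSpace ℝ X] [CompleteSpace X]
    (x : ℕ → X) (f : ℕ → X →L[ℝ] ℝ) (hframe : SchauderFrame x f)
    (S : X →L[ℝ] X →L[ℝ] ℝ) (hS : ∀ j, S (x j) = f j) :
    ∀ g : X →L[ℝ] ℝ, g ∈ (Submodule.span ℝ (Set.range f)).topologicalClosure →
      Tendsto (fun N => ∑ j ∈ Finset.range N, g (x j) • f j) atTop (𝓝 g) := by
  -- partial sum operators
  set P : ℕ → X →L[ℝ] X := fun N => ∑ j ∈ Finset.range N, (f j).smulRight (x j) with hPdef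
  have hPapp : ∀ N v, P N v = ∑ j ∈ Finset.range N, f j v • x j := by
    intro N v
    simp [hPdef, ContinuousLinearMap.sum_apply]
  have hPtend : ∀ v : X, Tendsto (fun N => P N v) atTop (𝓝 v) := by
    intro v
    simpa [hPapp] using hframe v
  -- uniform bound on the P N
  obtain ⟨C, hC⟩ : ∃ C, ∀ N, ‖P N‖ ≤ C := by
    apply banach_steinhaus
    intro v
    obtain ⟨C, hC⟩ := (hPtend v).norm.bddAbove_range
    exact ⟨C, fun N => hC ⟨N, rfl⟩⟩
  have hC0 : 0 ≤ C := le_trans (norm_nonneg _) (hC 0)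
  -- the swapped partial sums are compositions with P N
  have hT : ∀ (h : X →L[ℝ] ℝ) (N : ℕ),
      (∑ j ∈ Finset.range N, h (x j) • f j) = h.comp (P N) := by
    intro h N
    ext v
    simp [hPapp, ContinuousLinearMap.sum_apply, map_sum, mul_comm]
  -- symmetry of the bilinear form of S
  have hsym : ∀ u v : X, S u v = S v u := by
    intro u v
    have key : ∀ a b : X, Tendsto (fun N => ∑ j ∈ Finset.range N, f j a * f j b)
        atTop (𝓝 (S a b)) := by
      intro a b
      have h1 : Tendsto (fun N => S (P N a)) atTop (𝓝 (S a)) :=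
        (S.continuous.tendsto a).comp (hPtend a)
      have h2 : Tendsto (fun N => S (P N a) b) atTop (𝓝 (S a b)) :=
        ((ContinuousLinearMap.apply ℝ ℝ b).continuous.tendsto (S a)).comp h1
      convert h2 using 2 with N
      rw [hPapp, map_sum]
      simp [hS]
    have h3 := key u v
    have h4 : Tendsto (fun N => ∑ j ∈ Finset.range N, f j u * f j v) atTop (𝓝 (S v u)) := by
      simpa [mul_comm] using key v u
    exact tendsto_nhds_unique h3 h4
  -- the claim for each f k
  have hfk : ∀ k, Tendsto (fun N => ∑ j ∈ Finset.range N, (f k) (x j) • f j)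
      atTop (𝓝 (f k)) := by
    intro k
    have heq : ∀ N, (∑ j ∈ Finset.range N, (f k) (x j) • f j) = S (P N (x k)) := by
      intro N
      rw [hPapp, map_sum]
      refine Finset.sum_congr rfl fun j _ => ?_
      rw [map_smul, hS]
      congr 1
      rw [← hS k, ← hS j, hsym]
    have h1 : Tendsto (fun N => S (P N (x k))) atTop (𝓝 (S (x k))) :=
      (S.continuous.tendsto (x k)).comp (hPtend (x k))
    rw [hS k] at h1
    exact h1.congr fun N => (heq N).symm
  -- the claim on the span
  have hspan : ∀ g ∈ Submodule.span ℝ (Set.range f),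
      Tendsto (fun N => ∑ j ∈ Finset.range N, g (x j) • f j) atTop (𝓝 g) := by
    intro g hg
    induction hg using Submodule.span_induction with
    | mem g hgmem =>
        obtain ⟨k, rfl⟩ := hgmem
        exact hfk k
    | zero =>
        set_option linter.unnecessarySimpa false in
        simpa using (tendsto_const_nhds : Tendsto (fun _ : ℕ => (0 : X →L[ℝ] ℝ)) atTop _)
    | add a b ha hb iha ihb =>
        have := iha.add ihb
        convert this using 2 with N
        simp [add_smul, Finset.sum_add_distrib]
    | smul c a ha iha =>
        have := iha.const_smul c
        convert this using 2 with N
        simp [Finset.smul_sum, smul_smul]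
  -- closure argument
  intro g hg
  rw [Metric.tendsto_atTop]
  intro ε hε
  have hg' : g ∈ closure (Submodule.span ℝ (Set.range f) : Set (X →L[ℝ] ℝ)) := hg
  have hδ : (0:ℝ) < ε / (2 * (C + 1)) := by positivity
  obtain ⟨g', hg'mem, hgg'⟩ := Metric.mem_closure_iff.mp hg' _ hδ
  have htend := hspan g' hg'mem
  rw [Metric.tendsto_atTop] at htend
  obtain ⟨N₀, hN₀⟩ := htend (ε / 2) (by positivity)
  refine ⟨N₀, fun N hN => ?_⟩
  have hb1 : dist (∑ j ∈ Finset.range N, g (x j) • f j)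
      (∑ j ∈ Finset.range N, g' (x j) • f j) ≤ dist g g' * C := by
    rw [dist_eq_norm, hT g, hT g', ← ContinuousLinearMap.sub_comp]
    calc ‖(g - g').comp (P N)‖ ≤ ‖g - g'‖ * ‖P N‖ := ContinuousLinearMap.opNorm_comp_le _ _
      _ ≤ ‖g - g'‖ * C := by
          apply mul_le_mul_of_nonneg_left (hC N) (norm_nonneg _)
      _ = dist g g' * C := by rw [dist_eq_norm]
  calc dist (∑ j ∈ Finset.range N, g (x j) • f j) g
      ≤ dist (∑ j ∈ Finset.range N, g (x j) • f j) (∑ j ∈ Finset.range N, g' (x j) • f j)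
        + dist (∑ j ∈ Finset.range N, g' (x j) • f j) g' + dist g' g := dist_triangle4 _ _ _ _
    _ ≤ dist g g' * C + ε / 2 + dist g g' := by
        have := hN₀ N hN
        have hdist : dist g' g = dist g g' := dist_comm _ _
        linarith
    _ < ε := by
        have key : ε / (2 * (C + 1)) * C + ε / (2 * (C + 1)) = ε / 2 := by
          field_simp
        have h2 : dist g g' * C ≤ ε / (2 * (C + 1)) * C :=
          mul_le_mul_of_nonneg_right hgg'.le hC0
        linarith [hgg']
end

section
/- With (x_n, f_n) ∈ ℓ₁ × ℓ∞ defined by x_{2n-1} = x_{2n} = e_n for all n ≥ 1, f₁ = 𝟏, f₂ = e₁* − 𝟏, f_{2k−1} = e_k* − e₁*/2^k and f_{2k} = e₁*/2^k for k ≥ 2 (where 𝟏 = (1,1,1,…) ∈ ℓ∞), the partial sums Σ_{j=1}^{N} 𝟏(x_j) f_j do NOT converge in the norm of ℓ∞ to 𝟏 (where 𝟏(x_j) = Σ_k (x_j)_k). Consequently {(f_n, x_n)} is not a Schauder frame of the norm-closed linear span of {f_n : n ∈ ℕ}, even though 𝟏 = f₁ belongs to that span. -/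
open Filter Topology

/-- The constant-one sequence `𝟏 = (1,1,1,…)` as an element of `ℓ∞(ℕ, ℝ)`. -/
noncomputable def oneInf : lp (fun _ : ℕ => ℝ) ⊤ :=
  ⟨fun _ => (1 : ℝ), memℓp_infty ⟨1, by rintro r ⟨i, rfl⟩; simp⟩⟩

/-- The vectors of the example: `x₍₂ₙ₋₁₎ = x₍₂ₙ₎ = eₙ` for `n ≥ 1` (paper index `n`
corresponds to the coordinate `n - 1` of `ℓ₁`); index `0` is unused and set to `0`. -/
noncomputable def xSeq : ℕ → lp (fun _ : ℕ => ℝ) 1 := fun n =>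
  if n = 0 then 0 else lp.single 1 ((n + 1) / 2 - 1) 1

/-- The functionals of the example: `f₁ = 𝟏`, `f₂ = e₁* − 𝟏`,
`f₍₂ₖ₋₁₎ = eₖ* − e₁*/2ᵏ` and `f₍₂ₖ₎ = e₁*/2ᵏ` for `k ≥ 2` (the paper coordinate `k`
corresponds to the coordinate `k - 1` of `ℓ∞`); index `0` is unused and set to `0`. -/
noncomputable def fSeq : ℕ → lp (fun _ : ℕ => ℝ) ⊤ := fun n =>
  if n = 0 then 0
  else if n = 1 then oneInf
  else if n = 2 then lp.single ⊤ 0 1 - oneInf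
  else if n % 2 = 1 then
    lp.single ⊤ ((n + 1) / 2 - 1) 1 - ((2 : ℝ) ^ ((n + 1) / 2))⁻¹ • lp.single ⊤ 0 1
  else ((2 : ℝ) ^ (n / 2))⁻¹ • lp.single ⊤ 0 1

lemma oneInf_apply (k : ℕ) : oneInf k = 1 := rfl

lemma tsum_one (j : ℕ) (hj : j ≠ 0) : (∑' k : ℕ, xSeq j k * oneInf k) = 1 := by
  simp only [xSeq, if_neg hj, oneInf_apply, mul_one]
  rw [tsum_eq_single ((j + 1) / 2 - 1)
      (fun b hb => lp.single_apply_ne _ _ _ hb)]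
  exact lp.single_apply_self _ _ _

lemma fSeq_one : fSeq 1 = oneInf := by simp [fSeq]

lemma fSeq_apply_big {j m : ℕ} (hj : 3 ≤ j) (hm0 : m ≠ 0)
    (hm : (j + 1) / 2 - 1 ≠ m) : fSeq j m = 0 := by
  have h0 : j ≠ 0 := by omega
  have h1 : j ≠ 1 := by omega
  have h2 : j ≠ 2 := by omega
  simp only [fSeq, if_neg h0, if_neg h1, if_neg h2]
  rcases Nat.even_or_odd j with he | ho
  · rw [if_neg (by have := Nat.even_iff.mp he; omega : ¬ j % 2 = 1)]
    rw [lp.coeFn_smul, Pi.smul_apply, lp.single_apply_ne _ _ _ hm0]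
    simp
  · rw [if_pos (Nat.odd_iff.mp ho), lp.coeFn_sub, Pi.sub_apply,
      lp.coeFn_smul, Pi.smul_apply,
      lp.single_apply_ne _ _ _ (Ne.symm hm),
      lp.single_apply_ne _ _ _ hm0]
    simp

lemma sum_coord (N : ℕ) (hN : 2 ≤ N) :
    (∑ j ∈ Finset.Icc 1 N, (∑' k : ℕ, xSeq j k * oneInf k) • fSeq j) (N + 1) = 0 := by
  rw [lp.coeFn_sum, Finset.sum_apply]
  have hc : ∀ j ∈ Finset.Icc 1 N,
      ((∑' k : ℕ, xSeq j k * oneInf k) • fSeq j) (N + 1) = fSeq j (N + 1) := by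
    intro j hj
    rw [lp.coeFn_smul, Pi.smul_apply, tsum_one j (by simp at hj; omega), one_smul]
  rw [Finset.sum_congr rfl hc]
  have hsplit : Finset.Icc 1 N = Finset.Ioc 0 N := by
    ext x; simp [Nat.lt_iff_add_one_le]
  rw [hsplit, ← Finset.sum_Ioc_consecutive _ (by omega : (0:ℕ) ≤ 2) (by omega : 2 ≤ N)]
  have h1 : Finset.Ioc 0 2 = {1, 2} := by decide
  have h2 : ∑ j ∈ Finset.Ioc 2 N, fSeq j (N + 1) = 0 :=
    Finset.sum_eq_zero fun j hj => by
      simp only [Finset.mem_Ioc] at hj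
      exact fSeq_apply_big (by omega) (by omega) (by omega)
  rw [h1, h2, add_zero]
  have e1 : fSeq 1 (N + 1) = 1 := by rw [fSeq_one]; rfl
  have e2 : fSeq 2 (N + 1) = -1 := by
    rw [show fSeq 2 = lp.single ⊤ 0 1 - oneInf from by simp [fSeq],
      lp.coeFn_sub, Pi.sub_apply,
      lp.single_apply_ne _ _ _ (by omega : N + 1 ≠ 0), oneInf_apply]
    norm_num
  simp [e1, e2]

/-- For the example system `{(xₙ, fₙ)}` of `ℓ₁ × ℓ∞`, the partial sums
`∑_{j=1}^N 𝟏(xⱼ) fⱼ` do not converge in the norm of `ℓ∞` to `𝟏` (here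
`𝟏(xⱼ) = ∑ₖ (xⱼ)ₖ = ∑ₖ (xⱼ)ₖ · 𝟏ₖ`).  Consequently `{(fₙ, xₙ)}` is not a Schauder
frame of the norm-closed linear span of `{fₙ}`, even though `𝟏 = f₁` lies in it. -/
theorem example_swap_not_frame :
    (¬ Tendsto (fun N => ∑ j ∈ Finset.Icc 1 N, (∑' k : ℕ, xSeq j k * oneInf k) • fSeq j)
        atTop (𝓝 oneInf)) ∧
    oneInf ∈ (Submodule.span ℝ (Set.range fSeq)).topologicalClosure ∧
    ¬ (∀ g : lp (fun _ : ℕ => ℝ) ⊤,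
        g ∈ (Submodule.span ℝ (Set.range fSeq)).topologicalClosure →
        Tendsto (fun N => ∑ j ∈ Finset.Icc 1 N, (∑' k : ℕ, xSeq j k * g k) • fSeq j)
          atTop (𝓝 g)) := by
  have hmem : oneInf ∈ (Submodule.span ℝ (Set.range fSeq)).topologicalClosure :=
    Submodule.le_topologicalClosure _ (Submodule.subset_span ⟨1, fSeq_one⟩)
  have hnot : ¬ Tendsto (fun N => ∑ j ∈ Finset.Icc 1 N,
      (∑' k : ℕ, xSeq j k * oneInf k) • fSeq j) atTop (𝓝 oneInf) := by
    intro h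
    obtain ⟨N₀, hN₀⟩ := (Metric.tendsto_atTop.mp h) 1 (by norm_num : (0:ℝ) < 1)
    set N := max N₀ 2 with hNdef
    have hd := hN₀ N (le_max_left _ _)
    set S := ∑ j ∈ Finset.Icc 1 N, (∑' k : ℕ, xSeq j k * oneInf k) • fSeq j with hS
    have hle : (1 : ℝ) ≤ ‖S - oneInf‖ := by
      have := lp.norm_apply_le_norm (E := fun _ : ℕ => ℝ) ENNReal.top_ne_zero
        (S - oneInf) (N + 1)
      rw [lp.coeFn_sub, Pi.sub_apply, sum_coord N (le_max_right _ _), oneInf_apply] at this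
      rwa [zero_sub, norm_neg, norm_one] at this
    rw [dist_eq_norm] at hd
    linarith
  exact ⟨hnot, hmem, fun h => hnot (h oneInf hmem)⟩
end

section
/- Let 1 ≤ p ≤ 2 and let q be the conjugate exponent, 1/p + 1/q = 1 (q = ∞ when p = 1). Then the map S : ℓ_p(ℕ, ℝ) → (ℓ_p(ℕ, ℝ))* defined by (S x)(y) = Σ_n x_n y_n for x, y ∈ ℓ_p is a well-defined bounded linear operator with ‖S‖ = 1, and S(e_n) = e_n* for every n, where (e_n) is the unit vector basis of ℓ_p and (e_n*) are the coordinate functionals. Consequently the unit vector basis {(e_n, e_n*)} is an unconditional Hilbert-Schauder basis of ℓ_p. -/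
open Filter Topology
open scoped ENNReal

lemma my_conj : ((2:ℝ≥0∞)).toReal.HolderConjugate ((2:ℝ≥0∞)).toReal := by
  rw [Real.holderConjugate_iff] <;> simp <;> norm_num

section Aux
variable (p : ℝ≥0∞) [hp1 : Fact (1 ≤ p)] (hp2 : p ≤ 2)
include hp2

lemma my_memℓ2 (f : lp (fun _ : ℕ => ℝ) p) : Memℓp (⇑f) 2 :=
  (lp.memℓp f).of_exponent_ge hp2

lemma my_norm2_le (f : lp (fun _ : ℕ => ℝ) p) :
    ‖(⟨⇑f, my_memℓ2 p hp2 f⟩ : lp (fun _ : ℕ => ℝ) 2)‖ ≤ ‖f‖ := by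
  have hpt : p ≠ ⊤ := (hp2.trans_lt (by norm_num)).ne
  have hpr1 : 1 ≤ p.toReal := by
    have := ENNReal.toReal_mono hpt hp1.elim
    simpa using this
  have hpr2 : p.toReal ≤ 2 := by
    have := ENNReal.toReal_mono (by norm_num : (2:ℝ≥0∞) ≠ ⊤) hp2
    simpa using this
  set g : lp (fun _ : ℕ => ℝ) 2 := ⟨⇑f, my_memℓ2 p hp2 f⟩ with hgdef
  have h2 : ((2:ℝ≥0∞)).toReal = 2 := by simp
  have hg : ‖g‖ ^ (2:ℝ) = ∑' n, ‖f n‖ ^ (2:ℝ) := by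
    have := lp.norm_rpow_eq_tsum (p := 2) (by norm_num [h2]) g
    simpa [h2, hgdef] using this
  have hfp : ∑' n, ‖f n‖ ^ p.toReal = ‖f‖ ^ p.toReal :=
    (lp.norm_rpow_eq_tsum (by linarith) f).symm
  have key : ∀ n, ‖f n‖ ^ (2:ℝ) ≤ ‖f n‖ ^ p.toReal * ‖f‖ ^ (2 - p.toReal) := by
    intro n
    have h1 : ‖f n‖ ^ (2:ℝ) = ‖f n‖ ^ p.toReal * ‖f n‖ ^ (2 - p.toReal) := by
      rw [← Real.rpow_add_of_nonneg (norm_nonneg _) (by linarith) (by linarith)]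
      norm_num
    rw [h1]
    have hle : ‖f n‖ ≤ ‖f‖ := lp.norm_apply_le_norm ((lt_of_lt_of_le zero_lt_one hp1.elim).ne') f n
    exact mul_le_mul_of_nonneg_left
      (Real.rpow_le_rpow (norm_nonneg _) hle (by linarith))
      (Real.rpow_nonneg (norm_nonneg _) _)
  have hs2 : Summable (fun n => ‖f n‖ ^ (2:ℝ)) := by
    have := (my_memℓ2 p hp2 f).summable (by norm_num [h2])
    simpa [h2] using this
  have hsp : Summable (fun n => ‖f n‖ ^ p.toReal) := (lp.memℓp f).summable (by linarith)
  have hsum : ∑' n, ‖f n‖ ^ (2:ℝ) ≤ ‖f‖ ^ (2:ℝ) := by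
    calc ∑' n, ‖f n‖ ^ (2:ℝ)
        ≤ ∑' n, ‖f n‖ ^ p.toReal * ‖f‖ ^ (2 - p.toReal) :=
          Summable.tsum_le_tsum key hs2 (hsp.mul_right _)
      _ = (∑' n, ‖f n‖ ^ p.toReal) * ‖f‖ ^ (2 - p.toReal) := tsum_mul_right
      _ = ‖f‖ ^ p.toReal * ‖f‖ ^ (2 - p.toReal) := by rw [hfp]
      _ = ‖f‖ ^ (2:ℝ) := by
          rw [← Real.rpow_add_of_nonneg (norm_nonneg _) (by linarith) (by linarith)]
          norm_num
  have := hg.le.trans hsum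
  exact (Real.rpow_le_rpow_iff (norm_nonneg _) (norm_nonneg _) (by norm_num)).1 this

lemma my_summable (x y : lp (fun _ : ℕ => ℝ) p) :
    Summable (fun n => x n * y n) := by
  have h := lp.summable_mul my_conj
    (⟨⇑x, my_memℓ2 p hp2 x⟩ : lp (fun _ : ℕ => ℝ) 2)
    (⟨⇑y, my_memℓ2 p hp2 y⟩ : lp (fun _ : ℕ => ℝ) 2)
  refine Summable.of_abs ?_
  simpa [abs_mul] using h

lemma my_bound (x y : lp (fun _ : ℕ => ℝ) p) :
    ‖∑' n, x n * y n‖ ≤ ‖x‖ * ‖y‖ := by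
  set X : lp (fun _ : ℕ => ℝ) 2 := ⟨⇑x, my_memℓ2 p hp2 x⟩
  set Y : lp (fun _ : ℕ => ℝ) 2 := ⟨⇑y, my_memℓ2 p hp2 y⟩
  have h1 : ‖∑' n, x n * y n‖ ≤ ∑' n, ‖x n‖ * ‖y n‖ := by
    have := norm_tsum_le_tsum_norm (f := fun n => x n * y n) ?_
    · simpa [norm_mul] using this
    · simpa [norm_mul] using lp.summable_mul my_conj X Y
  have h2 : ∑' n, ‖x n‖ * ‖y n‖ ≤ ‖X‖ * ‖Y‖ := lp.tsum_mul_le_mul_norm' my_conj X Y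
  refine h1.trans (h2.trans ?_)
  exact mul_le_mul (my_norm2_le p hp2 x) (my_norm2_le p hp2 y) (norm_nonneg _) (norm_nonneg _)

end Aux

set_option maxHeartbeats 1000000 in
/-- For `1 ≤ p ≤ 2`, the natural pairing `(S x)(y) = ∑ₙ xₙ yₙ` defines a bounded linear
operator `S : ℓ_p → (ℓ_p)*` of norm `1` sending each unit vector `eₙ` to the coordinate
functional `eₙ*`; consequently the unit vector basis `{(eₙ, eₙ*)}` is an unconditional
Hilbert-Schauder basis of `ℓ_p`.  (The hypothesis `1 ≤ p` is provided as a `Fact`.) -/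
theorem unit_basis_lp_is_HS_basis (p : ℝ≥0∞) [hp1 : Fact (1 ≤ p)] (hp2 : p ≤ 2) :
    ∃ S : lp (fun _ : ℕ => ℝ) p →L[ℝ] (lp (fun _ : ℕ => ℝ) p →L[ℝ] ℝ),
      (∀ x y : lp (fun _ : ℕ => ℝ) p, S x y = ∑' n : ℕ, x n * y n) ∧
      ‖S‖ = 1 ∧
      (∀ (n : ℕ) (y : lp (fun _ : ℕ => ℝ) p), S (lp.single p n 1) y = y n) ∧
      ∀ v : lp (fun _ : ℕ => ℝ) p,
        HasSum (fun n : ℕ => v n • lp.single p n (1 : ℝ)) v := by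
  have hpt : p ≠ ⊤ := (hp2.trans_lt (by norm_num)).ne
  have hpr1 : 1 ≤ p.toReal := by
    have := ENNReal.toReal_mono hpt hp1.elim
    simpa using this
  have hsum := my_summable p hp2
  set L : lp (fun _ : ℕ => ℝ) p →ₗ[ℝ] lp (fun _ : ℕ => ℝ) p →ₗ[ℝ] ℝ :=
    LinearMap.mk₂ ℝ (fun x y => ∑' n : ℕ, x n * y n)
      (fun x x' y => by
        show (∑' n : ℕ, (x + x') n * y n)
            = (∑' n : ℕ, x n * y n) + ∑' n : ℕ, x' n * y n
        rw [← Summable.tsum_add (hsum x y) (hsum x' y)]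
        exact tsum_congr fun n => by simp [add_mul])
      (fun c x y => by
        show (∑' n : ℕ, (c • x) n * y n) = c • ∑' n : ℕ, x n * y n
        rw [smul_eq_mul, ← tsum_mul_left]
        exact tsum_congr fun n => by simp [mul_assoc])
      (fun x y y' => by
        show (∑' n : ℕ, x n * (y + y') n)
            = (∑' n : ℕ, x n * y n) + ∑' n : ℕ, x n * y' n
        rw [← Summable.tsum_add (hsum x y) (hsum x y')]
        exact tsum_congr fun n => by simp [mul_add])
      (fun c x y => by
        show (∑' n : ℕ, x n * (c • y) n) = c • ∑' n : ℕ, x n * y n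
        rw [smul_eq_mul, ← tsum_mul_left]
        exact tsum_congr fun n => by simp; ring)
  refine ⟨LinearMap.mkContinuous₂ L 1 (fun x y => by
    simpa [L] using my_bound p hp2 x y), fun x y => rfl, ?_, ?_, ?_⟩
  · -- norm = 1
    refine le_antisymm (LinearMap.mkContinuous₂_norm_le _ zero_le_one _) ?_
    set S := LinearMap.mkContinuous₂ L 1 (fun x y => by simpa [L] using my_bound p hp2 x y)
    set e : lp (fun _ : ℕ => ℝ) p := lp.single p 0 (1 : ℝ) with he
    have hne : ‖e‖ = 1 := by
      have := lp.norm_single (p := p) (E := fun _ : ℕ => ℝ) (zero_lt_one.trans_le hp1.elim)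
        0 (1 : ℝ)
      simpa [he] using this
    have hval : S e e = 1 := by
      show (∑' m : ℕ, e m * e m) = 1
      rw [tsum_eq_single 0 fun m hm => ?_]
      · simp [he, lp.single_apply_self]
      · rw [he]
        rw [lp.single_apply_ne (E := fun _ : ℕ => ℝ) p 0 1 hm]
        ring
    have h1 : (1:ℝ) ≤ ‖S‖ := by
      have h := (S e).le_opNorm e
      have h2 := S.le_opNorm e
      have h3 : ‖S e e‖ ≤ ‖S‖ * ‖e‖ * ‖e‖ :=
        h.trans (mul_le_mul_of_nonneg_right h2 (norm_nonneg _))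
      rw [hval, hne] at h3
      simpa using h3
    exact h1
  · -- singles
    intro n y
    show (∑' m : ℕ, (lp.single p n (1:ℝ) : lp (fun _ : ℕ => ℝ) p) m * y m) = y n
    rw [tsum_eq_single n fun m hm => ?_]
    · simp [lp.single_apply_self]
    · rw [lp.single_apply_ne (E := fun _ : ℕ => ℝ) p n 1 hm]
      ring
  · -- Schauder basis
    intro v
    have h := lp.hasSum_single (p := p) hpt v
    have heq : (fun n : ℕ => (v n : ℝ) • lp.single p n (1:ℝ))
        = fun i : ℕ => lp.single (E := fun _ : ℕ => ℝ) p i (v i) := by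
      funext n
      apply lp.ext
      funext m
      by_cases hm : m = n
      · subst hm
        simp [lp.coeFn_smul, lp.single_apply_self]
      · simp [lp.coeFn_smul, lp.single_apply_ne p _ _ hm, Pi.single_eq_of_ne hm]
    rw [heq]
    exact h
end

section
/- Let X be a real Banach space and let {(x_n, f_n)}_{n∈ℕ} be a Hilbert-Schauder frame of X with Hilbert-Schauder frame operator S. Then there exists K > 0 such that every f ∈ X* with ‖f‖ ≤ K lies in the weak-* closure of the set {S x : x ∈ X, ‖S x‖ ≤ 1}; that is, K·B_{X*} ⊆ weak-*-closure of (B_{X*} ∩ S(X)). -/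
open Filter Topology

/-- For a Hilbert-Schauder frame with HSf-operator `S`, there is `K > 0` such that
`K · B_{X*}` is contained in the weak-* closure of `B_{X*} ∩ S(X)`. -/
theorem hsf_ball_in_weakstar_closure
    {X : Type*} [NormedAddCommGroup X] [NormedSpace ℝ X] [CompleteSpace X]
    (x : ℕ → X) (f : ℕ → X →L[ℝ] ℝ) (hframe : SchauderFrame x f)
    (S : X →L[ℝ] X →L[ℝ] ℝ) (hS : ∀ j, S (x j) = f j) :
    ∃ K : ℝ, 0 < K ∧ ∀ g : X →L[ℝ] ℝ, ‖g‖ ≤ K →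
      StrongDual.toWeakDual g ∈
        closure (StrongDual.toWeakDual ''
          {h : X →L[ℝ] ℝ | ‖h‖ ≤ 1 ∧ ∃ v : X, S v = h}) := by
  -- partial sum operators
  set P : ℕ → X →L[ℝ] X := fun N => ∑ j ∈ Finset.range N, (f j).smulRight (x j) with hP
  have hPapp : ∀ N v, P N v = ∑ j ∈ Finset.range N, f j v • x j := by
    intro N v
    simp [hP, ContinuousLinearMap.sum_apply]
  -- pointwise boundedness from convergence
  have hbdd : ∀ v : X, ∃ C, ∀ N, ‖P N v‖ ≤ C := by
    intro v
    have h := hframe v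
    have : Tendsto (fun N => P N v) atTop (𝓝 v) := by
      simpa [hPapp] using h
    have hb := this.norm.bddAbove_range
    obtain ⟨C, hC⟩ := hb
    exact ⟨C, fun N => hC ⟨N, rfl⟩⟩
  obtain ⟨C, hC⟩ := banach_steinhaus hbdd
  set C' : ℝ := max C 1 with hC'
  have hC'1 : (1:ℝ) ≤ C' := le_max_right _ _
  have hC'0 : (0:ℝ) < C' := lt_of_lt_of_le one_pos hC'1
  refine ⟨1 / C', by positivity, ?_⟩
  intro g hg
  -- approximants
  have key : Tendsto (fun N => StrongDual.toWeakDual (g.comp (P N))) atTop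
      (𝓝 (StrongDual.toWeakDual g)) := by
    rw [tendsto_iff_forall_eval_tendsto_topDualPairing]
    intro v
    have h := hframe v
    have := (g.continuous.tendsto v).comp (by simpa [hPapp] using h :
      Tendsto (fun N => P N v) atTop (𝓝 v))
    exact this
  refine mem_closure_of_tendsto key (Eventually.of_forall fun N => ?_)
  refine ⟨g.comp (P N), ⟨?_, ?_⟩, rfl⟩
  · calc ‖g.comp (P N)‖ ≤ ‖g‖ * ‖P N‖ := g.opNorm_comp_le (P N)
      _ ≤ (1 / C') * C' := by
          apply mul_le_mul hg ((hC N).trans (le_max_left _ _)) (norm_nonneg _)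
          positivity
      _ = 1 := by field_simp
  · refine ⟨∑ j ∈ Finset.range N, g (x j) • x j, ?_⟩
    ext v
    simp only [map_sum, map_smul, ContinuousLinearMap.sum_apply,
      ContinuousLinearMap.coe_sum', Finset.sum_apply, ContinuousLinearMap.smul_apply]
    rw [ContinuousLinearMap.comp_apply, hPapp, map_sum]
    refine Finset.sum_congr rfl fun j _ => ?_
    rw [hS]
    simp [mul_comm]
end

section
/- Let X be a reflexive real Banach space and let {(x_n, f_n)}_{n∈ℕ} be a Hilbert-Schauder frame of X with Hilbert-Schauder frame operator S. Then the range S(X) is norm-dense in X*, and for every f ∈ X* the partial sums Σ_{j≤N} f(x_j) f_j converge in the norm of X* to f. -/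
open Filter Topology

/-- If every continuous linear functional vanishing on a submodule is zero, then the
submodule is dense. -/
lemma dense_of_dual_eq_zero {E : Type*} [NormedAddCommGroup E] [NormedSpace ℝ E]
    (p : Submodule ℝ E) (h : ∀ Φ : E →L[ℝ] ℝ, (∀ a ∈ p, Φ a = 0) → Φ = 0) :
    Dense (p : Set E) := by
  rw [Submodule.dense_iff_topologicalClosure_eq_top]
  by_contra this
  obtain ⟨y, hy⟩ : ∃ y : E, y ∉ p.topologicalClosure := by
    by_contra hall
    push_neg at hall
    exact this (Submodule.eq_top_iff'.2 hall)
  obtain ⟨Φ, u, hu1, hu2⟩ := geometric_hahn_banach_closed_point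
    (p.topologicalClosure.convex) p.isClosed_topologicalClosure hy
  have hker : ∀ a ∈ p, Φ a = 0 := by
    intro a ha
    have ha' : ∀ t : ℝ, t * Φ a < u := by
      intro t
      have := hu1 (t • a) (Submodule.le_topologicalClosure p (p.smul_mem t ha))
      simpa using this
    by_contra hne
    have := ha' (u / Φ a)
    rw [div_mul_cancel₀ _ hne] at this
    exact lt_irrefl u this
  have : Φ = 0 := h Φ hker
  rw [this] at hu1 hu2
  have h0 := hu1 0 (Submodule.zero_mem _)
  simp at h0 hu2
  linarith

/-- If `X` is reflexive (the canonical embedding into the double dual is surjective)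
and `{(xₙ, fₙ)}` is a Hilbert-Schauder frame of `X` with HSf-operator `S`, then
`S` has norm-dense range in `X*` and every `f ∈ X*` satisfies
`f = ∑ⱼ f(xⱼ) fⱼ` in the norm of `X*`. -/
theorem hsf_reflexive_dense_range
    {X : Type*} [NormedAddCommGroup X] [NormedSpace ℝ X] [CompleteSpace X]
    (hrefl : Function.Surjective (NormedSpace.inclusionInDoubleDual ℝ X))
    (x : ℕ → X) (f : ℕ → X →L[ℝ] ℝ) (hframe : SchauderFrame x f)
    (S : X →L[ℝ] X →L[ℝ] ℝ) (hS : ∀ j, S (x j) = f j) :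
    DenseRange (fun v : X => S v) ∧
    ∀ g : X →L[ℝ] ℝ,
      Tendsto (fun N => ∑ j ∈ Finset.range N, g (x j) • f j) atTop (𝓝 g) := by
  classical
  -- the partial sum operators
  set P : ℕ → X →L[ℝ] X := fun N => ∑ j ∈ Finset.range N, (f j).smulRight (x j) with hPdef
  have hPapp : ∀ N v, P N v = ∑ j ∈ Finset.range N, f j v • x j := by
    intro N v
    simp [hPdef, ContinuousLinearMap.sum_apply]
  have hPtend : ∀ v, Tendsto (fun N => P N v) atTop (𝓝 v) := by
    intro v
    have := hframe v
    simpa [hPapp] using this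
  -- uniform boundedness
  obtain ⟨C, hC⟩ : ∃ C, ∀ N, ‖P N‖ ≤ C := by
    apply banach_steinhaus
    intro v
    have hb : BddAbove (Set.range fun N => ‖P N v‖) :=
      ((hPtend v).norm).bddAbove_range
    obtain ⟨c, hc⟩ := hb
    exact ⟨c, fun N => hc ⟨N, rfl⟩⟩
  have hC0 : 0 ≤ C := le_trans (norm_nonneg _) (hC 0)
  -- key identity: partial sums of the dual expansion are compositions with `P N`
  have hkey : ∀ (g : X →L[ℝ] ℝ) (N : ℕ),
      ∑ j ∈ Finset.range N, g (x j) • f j = g.comp (P N) := by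
    intro g N
    ext v
    simp only [ContinuousLinearMap.sum_apply, ContinuousLinearMap.smul_apply,
      ContinuousLinearMap.comp_apply, hPapp, map_sum, map_smul]
    refine Finset.sum_congr rfl fun j _ => ?_
    simp [mul_comm]
  -- symmetry of `S`
  have hsym : ∀ v w, S v w = S w v := by
    intro v w
    have hc1 : Tendsto (fun N => S (P N v) w) atTop (𝓝 (S v w)) :=
      ((ContinuousLinearMap.apply ℝ ℝ w).continuous.tendsto _).comp
        ((S.continuous.tendsto v).comp (hPtend v))
    have hc2 : Tendsto (fun N => S (P N w) v) atTop (𝓝 (S w v)) :=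
      ((ContinuousLinearMap.apply ℝ ℝ v).continuous.tendsto _).comp
        ((S.continuous.tendsto w).comp (hPtend w))
    have he : ∀ N, S (P N v) w = S (P N w) v := by
      intro N
      simp only [hPapp, map_sum, map_smul, hS, ContinuousLinearMap.sum_apply,
        ContinuousLinearMap.smul_apply, smul_eq_mul]
      refine Finset.sum_congr rfl fun j _ => ?_
      ring
    rw [show (fun N => S (P N w) v) = fun N => S (P N v) w from
      funext fun N => (he N).symm] at hc2
    exact tendsto_nhds_unique hc1 hc2
  -- convergence of the dual expansion on the range of `S`
  have hrangeconv : ∀ v : X,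
      Tendsto (fun N => ∑ j ∈ Finset.range N, (S v) (x j) • f j) atTop (𝓝 (S v)) := by
    intro v
    have heq : ∀ N, ∑ j ∈ Finset.range N, (S v) (x j) • f j = S (P N v) := by
      intro N
      rw [hPapp, map_sum]
      refine Finset.sum_congr rfl fun j _ => ?_
      rw [map_smul, hsym v (x j), hS]
    rw [show (fun N => ∑ j ∈ Finset.range N, (S v) (x j) • f j) = fun N => S (P N v) from
      funext heq]
    exact (S.continuous.tendsto v).comp (hPtend v)
  -- density of the range of `S`
  have hdense : Dense (Set.range fun v : X => S v) := by
    have h := dense_of_dual_eq_zero (LinearMap.range (S : X →ₗ[ℝ] (X →L[ℝ] ℝ))) ?_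
    · have hset : ((LinearMap.range (S : X →ₗ[ℝ] (X →L[ℝ] ℝ))) : Set (X →L[ℝ] ℝ))
          = Set.range fun v : X => S v := by
        ext g
        simp [LinearMap.mem_range]
      rwa [hset] at h
    · intro Φ hΦ
      obtain ⟨w, hw⟩ := hrefl Φ
      have hwv : ∀ v : X, S v w = 0 := by
        intro v
        have hv := hΦ (S v) ⟨v, rfl⟩
        rw [← hw, NormedSpace.dual_def] at hv
        exact hv
      have hw0 : w = 0 := by
        have hz : ∀ N, ∑ j ∈ Finset.range N, f j w • x j = 0 := by
          intro N
          apply Finset.sum_eq_zero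
          intro j _
          have : f j w = 0 := by rw [← hS j]; exact hwv (x j)
          rw [this, zero_smul]
        have hfw := hframe w
        rw [show (fun N => ∑ j ∈ Finset.range N, f j w • x j) = fun _ : ℕ => (0 : X) from
          funext hz] at hfw
        exact tendsto_nhds_unique hfw tendsto_const_nhds
      rw [← hw, hw0, map_zero]
  -- the main convergence statement for arbitrary functionals
  have hmain : ∀ g : X →L[ℝ] ℝ,
      Tendsto (fun N => ∑ j ∈ Finset.range N, g (x j) • f j) atTop (𝓝 g) := by
    intro g
    rw [Metric.tendsto_atTop]
    intro ε hε
    -- approximate `g` by an element of the range of `S`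
    have hgmem : g ∈ closure (Set.range fun v : X => S v) := hdense g
    rw [Metric.mem_closure_iff] at hgmem
    obtain ⟨h, hh, hdist⟩ := hgmem (ε / (2 * (C + 1))) (by positivity)
    obtain ⟨v, rfl⟩ := hh
    obtain ⟨N0, hN0⟩ := (Metric.tendsto_atTop.1 (hrangeconv v)) (ε / 4) (by positivity)
    refine ⟨N0, fun n hn => ?_⟩
    have h1 : ‖∑ j ∈ Finset.range n, g (x j) • f j - ∑ j ∈ Finset.range n, (S v) (x j) • f j‖
        ≤ ‖g - S v‖ * C := by
      have : ∑ j ∈ Finset.range n, g (x j) • f j - ∑ j ∈ Finset.range n, (S v) (x j) • f j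
          = (g - S v).comp (P n) := by
        rw [hkey, hkey, ← ContinuousLinearMap.sub_comp]
      rw [this]
      calc ‖(g - S v).comp (P n)‖ ≤ ‖g - S v‖ * ‖P n‖ := (g - S v).opNorm_comp_le (P n)
        _ ≤ ‖g - S v‖ * C := by
            exact mul_le_mul_of_nonneg_left (hC n) (norm_nonneg _)
    have h2 : ‖∑ j ∈ Finset.range n, (S v) (x j) • f j - S v‖ < ε / 4 := by
      have := hN0 n hn
      rwa [dist_eq_norm] at this
    have h3 : ‖S v - g‖ < ε / (2 * (C + 1)) := by
      rw [dist_eq_norm] at hdist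
      rwa [norm_sub_rev]
    have hgv : ‖g - S v‖ < ε / (2 * (C + 1)) := by rwa [norm_sub_rev] at h3
    rw [dist_eq_norm]
    have htri : ‖∑ j ∈ Finset.range n, g (x j) • f j - g‖
        ≤ ‖∑ j ∈ Finset.range n, g (x j) • f j - ∑ j ∈ Finset.range n, (S v) (x j) • f j‖
          + ‖∑ j ∈ Finset.range n, (S v) (x j) • f j - S v‖ + ‖S v - g‖ := by
      have := norm_sub_le_norm_sub_add_norm_sub
        (∑ j ∈ Finset.range n, g (x j) • f j) (∑ j ∈ Finset.range n, (S v) (x j) • f j) g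
      calc ‖∑ j ∈ Finset.range n, g (x j) • f j - g‖
          ≤ ‖∑ j ∈ Finset.range n, g (x j) • f j - ∑ j ∈ Finset.range n, (S v) (x j) • f j‖
            + ‖∑ j ∈ Finset.range n, (S v) (x j) • f j - g‖ := this
        _ ≤ _ := by
            have := norm_sub_le_norm_sub_add_norm_sub
              (∑ j ∈ Finset.range n, (S v) (x j) • f j) (S v) g
            linarith
    have hb1 : ‖g - S v‖ * C ≤ ε / (2 * (C + 1)) * C := by
      exact mul_le_mul_of_nonneg_right (le_of_lt hgv) hC0
    have hb2 : ε / (2 * (C + 1)) * C + ε / (2 * (C + 1)) = ε / 2 := by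
      have hC1 : C + 1 ≠ 0 := by positivity
      field_simp
    linarith [htri, h1, h2, h3, hb1]
  exact ⟨hdense, hmain⟩
end

section
/- Let X be a real Banach space, let {(x_n, f_n)}_{n∈ℕ} be a Hilbert-Schauder frame of X with Hilbert-Schauder frame operator S, let Y be the norm-closed linear span of {S x_n : n ∈ ℕ} in X*, and suppose T : Y → Y* is a bounded linear operator such that {(S x_n, T(S x_n))}_{n∈ℕ} is a Schauder frame of Y (i.e., for every f ∈ Y, the partial sums Σ_{n≤N} (T(S x_n))(f) · S x_n converge to f in norm). Then (T S x)(f) = f(x) for every x ∈ X and every f ∈ Y. -/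
open Filter Topology

/-- The norm-closed linear span in `X*` of the range of a sequence of functionals. -/
noncomputable def closedSpan {X : Type*} [NormedAddCommGroup X] [NormedSpace ℝ X]
    (F : ℕ → X →L[ℝ] ℝ) : Submodule ℝ (X →L[ℝ] ℝ) :=
  (Submodule.span ℝ (Set.range F)).topologicalClosure

/-- Port helper: the (strong) topology on the dual of a submodule of `X*`. In current Mathlib
instance search no longer finds it by itself (the `AddCommMonoid` of the submodule is not
unified with `AddCommGroup.toAddCommMonoid`); this is the same instance, made explicit. -/
noncomputable instance dualSubmoduleTopology {X : Type*} [NormedAddCommGroup X]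
    [NormedSpace ℝ X] (p : Submodule ℝ (X →L[ℝ] ℝ)) : TopologicalSpace (p →L[ℝ] ℝ) :=
  let _ : AddCommGroup p := inferInstance
  inferInstance

/-- Let `{(xₙ, fₙ)}` be a Hilbert-Schauder frame of `X` with HSf-operator `S`, let
`Y` be the norm-closed linear span of `{S xₙ}` in `X*` (with `g : ℕ → Y` the sequence
`g n = S xₙ` viewed in `Y`), and let `T : Y → Y*` be a bounded operator such that
`{(S xₙ, T(S xₙ))}` is a Schauder frame of `Y`.  Then `(T S x)(f) = f(x)` for all
`x ∈ X` and `f ∈ Y` (here `w ∈ Y` is any element representing `S x`). -/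
theorem hsf_TS_is_evaluation
    {X : Type*} [NormedAddCommGroup X] [NormedSpace ℝ X] [CompleteSpace X]
    (x : ℕ → X) (f : ℕ → X →L[ℝ] ℝ) (hframe : SchauderFrame x f)
    (S : X →L[ℝ] X →L[ℝ] ℝ) (hS : ∀ n, S (x n) = f n)
    (T : (closedSpan fun n => S (x n)) →L[ℝ] ((closedSpan fun n => S (x n)) →L[ℝ] ℝ))
    (g : ℕ → (closedSpan fun n => S (x n)))
    (hg : ∀ n, (g n : X →L[ℝ] ℝ) = S (x n))
    (hT : ∀ h : (closedSpan fun n => S (x n)),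
      Tendsto (fun N => ∑ n ∈ Finset.range N, T (g n) h • g n) atTop (𝓝 h)) :
    ∀ (v : X) (w : (closedSpan fun n => S (x n))), (w : X →L[ℝ] ℝ) = S v →
      ∀ h : (closedSpan fun n => S (x n)), T w h = (h : X →L[ℝ] ℝ) v := by
  intro v w hw h
  have hsc : ∀ N : ℕ,
      (((∑ j ∈ Finset.range N, f j v • g j : (closedSpan fun n => S (x n))) : X →L[ℝ] ℝ))
        = S (∑ j ∈ Finset.range N, f j v • x j) := by
    intro N
    simp [hg, hS]
  have hsw : Tendsto (fun N => ∑ j ∈ Finset.range N, f j v • g j) atTop (𝓝 w) := by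
    rw [Topology.IsEmbedding.subtypeVal.tendsto_nhds_iff]
    have : Tendsto (fun N => S (∑ j ∈ Finset.range N, f j v • x j)) atTop (𝓝 (S v)) :=
      (S.continuous.tendsto v).comp (hframe v)
    have he : (Subtype.val ∘ fun N => ∑ j ∈ Finset.range N, f j v • g j)
        = fun N => S (∑ j ∈ Finset.range N, f j v • x j) := funext fun N => hsc N
    rw [he, hw]
    exact this
  have h1 : Tendsto (fun N => T (∑ j ∈ Finset.range N, f j v • g j) h) atTop (𝓝 (T w h)) :=
    (((ContinuousLinearMap.apply ℝ ℝ h).continuous.comp T.continuous).tendsto w).comp hsw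
  have h1' : Tendsto (fun N => ∑ j ∈ Finset.range N, f j v * T (g j) h) atTop (𝓝 (T w h)) := by
    refine h1.congr fun N => ?_
    simp [smul_eq_mul]
  have h2 : Tendsto
      (fun N => ((∑ n ∈ Finset.range N, T (g n) h • g n :
        (closedSpan fun n => S (x n))) : X →L[ℝ] ℝ) v)
      atTop (𝓝 ((h : X →L[ℝ] ℝ) v)) := by
    have hcoe : Tendsto (fun N => ((∑ n ∈ Finset.range N, T (g n) h • g n :
        (closedSpan fun n => S (x n))) : X →L[ℝ] ℝ)) atTop (𝓝 (h : X →L[ℝ] ℝ)) := by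
      exact (continuous_subtype_val.tendsto h).comp (hT h)
    exact ((ContinuousLinearMap.apply ℝ ℝ v).continuous.tendsto _).comp hcoe
  have h2' : Tendsto (fun N => ∑ j ∈ Finset.range N, f j v * T (g j) h) atTop
      (𝓝 ((h : X →L[ℝ] ℝ) v)) := by
    refine h2.congr fun N => ?_
    push_cast
    simp only [ContinuousLinearMap.coe_sum', Finset.sum_apply, ContinuousLinearMap.coe_smul',
      Pi.smul_apply, smul_eq_mul]
    refine Finset.sum_congr rfl fun j _ => ?_
    rw [hg, hS, mul_comm]
  exact tendsto_nhds_unique h1' h2'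
end

section
/- Let X be a real Banach space admitting a Hilbert-Schauder frame {(x_n, f_n)}_{n∈ℕ} with Hilbert-Schauder frame operator S such that, with Y the norm-closed linear span of {S x_n : n ∈ ℕ} in X*, there is a bounded linear operator T : Y → Y* for which {(S x_n, T(S x_n))}_{n∈ℕ} is a Schauder frame of Y (i.e., for every f ∈ Y the partial sums Σ_{n≤N} (T(S x_n))(f) · S x_n converge to f in norm). Then X is isomorphic to a Hilbert space; more precisely, the Hilbert-Schauder analysis operator A : X → ℓ²(ℕ, ℝ), A x = (f_n(x))_n, is a bounded linear operator that is bounded below (there is c > 0 with ‖A x‖ ≥ c ‖x‖ for all x), so X is linearly homeomorphic to a closed subspace of ℓ²(ℕ, ℝ). -/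
open Filter Topology
open scoped ENNReal NNReal

/-- Port helper: instance synthesis no longer finds Mathlib's own topology of bounded
convergence on `Y →L[ℝ] ℝ` for a submodule `Y` of `X →L[ℝ] ℝ`; this is that same instance. -/
noncomputable instance closedSpanDualTopologicalSpace {X : Type*} [NormedAddCommGroup X]
    [NormedSpace ℝ X] (Y : Submodule ℝ (X →L[ℝ] ℝ)) : TopologicalSpace (Y →L[ℝ] ℝ) :=
  ContinuousLinearMap.topologicalSpace (E := Y)

private lemma rpow_toReal_two (a : ℝ) : a ^ ((2 : ℝ≥0∞).toReal) = a ^ 2 := by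
  have h2 : ((2 : ℝ≥0∞).toReal) = ((2 : ℕ) : ℝ) := by norm_num
  rw [h2, Real.rpow_natCast]

private lemma rpow_norm_two (a : ℝ) : ‖a‖ ^ ((2 : ℝ≥0∞).toReal) = a ^ 2 := by
  rw [rpow_toReal_two, Real.norm_eq_abs, sq_abs]

set_option maxHeartbeats 1000000 in
set_option synthInstance.maxHeartbeats 400000 in
/-- Suppose `X` has a Hilbert-Schauder frame `{(xₙ, fₙ)}` with HSf-operator `S` such
that, with `Y` the norm-closed linear span of `{S xₙ}` in `X*`, some bounded
`T : Y → Y*` makes `{(S xₙ, T(S xₙ))}` a Schauder frame of `Y`.  Then the analysis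
operator `A : X → ℓ²`, `(A v)ⱼ = fⱼ(v)`, is bounded below, so `X` is linearly
homeomorphic to a closed subspace of `ℓ²`; in particular `X` is isomorphic to a
Hilbert space. -/
theorem hsf_with_dual_frame_isomorphic_hilbert
    {X : Type*} [NormedAddCommGroup X] [NormedSpace ℝ X] [CompleteSpace X]
    (x : ℕ → X) (f : ℕ → X →L[ℝ] ℝ) (hframe : SchauderFrame x f)
    (S : X →L[ℝ] X →L[ℝ] ℝ) (hS : ∀ n, S (x n) = f n)
    (T : (closedSpan fun n => S (x n)) →L[ℝ] ((closedSpan fun n => S (x n)) →L[ℝ] ℝ))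
    (g : ℕ → (closedSpan fun n => S (x n)))
    (hg : ∀ n, (g n : X →L[ℝ] ℝ) = S (x n))
    (hT : ∀ h : (closedSpan fun n => S (x n)),
      Tendsto (fun N => ∑ n ∈ Finset.range N, T (g n) h • g n) atTop (𝓝 h)) :
    ∃ A : X →L[ℝ] lp (fun _ : ℕ => ℝ) 2,
      (∀ (v : X) (j : ℕ), (A v : ∀ _ : ℕ, ℝ) j = f j v) ∧
      (∃ c : ℝ, 0 < c ∧ ∀ v : X, c * ‖v‖ ≤ ‖A v‖) ∧
      ∃ Y : Submodule ℝ (lp (fun _ : ℕ => ℝ) 2),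
        IsClosed (Y : Set (lp (fun _ : ℕ => ℝ) 2)) ∧ Nonempty (X ≃L[ℝ] Y) := by
  classical
  letI iY1 : SeminormedAddCommGroup ((closedSpan fun n => S (x n)) →L[ℝ] ℝ) :=
    ContinuousLinearMap.toSeminormedAddCommGroup (E := closedSpan fun n => S (x n))
      (F := ℝ) (σ₁₂ := RingHom.id ℝ)
  letI iY2 : NormedSpace ℝ ((closedSpan fun n => S (x n)) →L[ℝ] ℝ) :=
    ContinuousLinearMap.toNormedSpace (E := closedSpan fun n => S (x n))
      (F := ℝ) (σ₁₂ := RingHom.id ℝ)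
  letI iY3 : SeminormedAddCommGroup
      ((closedSpan fun n => S (x n)) →L[ℝ] ((closedSpan fun n => S (x n)) →L[ℝ] ℝ)) :=
    ContinuousLinearMap.toSeminormedAddCommGroup (E := closedSpan fun n => S (x n))
      (F := (closedSpan fun n => S (x n)) →L[ℝ] ℝ) (σ₁₂ := RingHom.id ℝ)
  have hTh : ∀ h : (closedSpan fun n => S (x n)), ‖T h h‖ ≤ ‖T h‖ * ‖h‖ := fun h => by
    exact ContinuousLinearMap.le_opNorm (E := closedSpan fun n => S (x n)) (F := ℝ)
      (σ₁₂ := RingHom.id ℝ) (T h) h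
  obtain ⟨C, hC0, hT'op⟩ : ∃ C : ℝ, 0 ≤ C ∧
      ∀ h : (closedSpan fun n => S (x n)), ‖T h‖ ≤ C * ‖h‖ := by
    let T' : @ContinuousLinearMap ℝ ℝ _ _ (RingHom.id ℝ) (closedSpan fun n => S (x n))
        _ _
        ((closedSpan fun n => S (x n)) →L[ℝ] ℝ)
        iY1.toPseudoMetricSpace.toUniformSpace.toTopologicalSpace _ _ _ :=
      ⟨T.toLinearMap, T.continuous⟩
    have key := fun h => ContinuousLinearMap.le_opNorm (E := closedSpan fun n => S (x n))
      (F := (closedSpan fun n => S (x n)) →L[ℝ] ℝ) (σ₁₂ := RingHom.id ℝ) T' h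
    have key0 := ContinuousLinearMap.opNorm_nonneg (E := closedSpan fun n => S (x n))
      (F := (closedSpan fun n => S (x n)) →L[ℝ] ℝ) (σ₁₂ := RingHom.id ℝ) T'
    exact ⟨_, key0, key⟩
  -- partial sum operators and Banach–Steinhaus
  set P : ℕ → X →L[ℝ] X := fun N => ∑ n ∈ Finset.range N, (f n).smulRight (x n) with hPdef
  have hPapply : ∀ N v, P N v = ∑ n ∈ Finset.range N, f n v • x n := by
    intro N v
    simp [hPdef, ContinuousLinearMap.sum_apply, ContinuousLinearMap.smulRight_apply]
  have hPtend : ∀ v : X, Tendsto (fun N => P N v) atTop (𝓝 v) := by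
    intro v
    simpa [hPapply] using hframe v
  obtain ⟨K₀, hK₀⟩ : ∃ K₀, ∀ N, ‖P N‖ ≤ K₀ := by
    apply banach_steinhaus
    intro v
    obtain ⟨C, hC⟩ := (hPtend v).norm.bddAbove_range
    exact ⟨C, fun N => hC (Set.mem_range_self N)⟩
  set K : ℝ := max K₀ 1 with hKdef
  have hK : ∀ N, ‖P N‖ ≤ K := fun N => (hK₀ N).trans (le_max_left _ _)
  have hKpos : (0 : ℝ) < K := lt_of_lt_of_le one_pos (le_max_right _ _)
  -- the squares of the coefficients sum to `S v v`
  have hsq : ∀ v : X,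
      Tendsto (fun N => ∑ n ∈ Finset.range N, (f n v) ^ 2) atTop (𝓝 (S v v)) := by
    intro v
    have h1 : Tendsto (fun N => S.flip (S.flip v v • 0 + v) (P N v)) atTop
        (𝓝 (S.flip (S.flip v v • 0 + v) v)) := by
      exact ((S.flip _).continuous.tendsto v).comp (hPtend v)
    simp only [smul_zero, zero_add] at h1
    have h2 : ∀ N, S.flip v (P N v) = ∑ n ∈ Finset.range N, (f n v) ^ 2 := by
      intro N
      rw [hPapply, map_sum]
      refine Finset.sum_congr rfl fun n _ => ?_
      rw [map_smul, smul_eq_mul, ContinuousLinearMap.flip_apply, hS, sq]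
    simp only [ContinuousLinearMap.flip_apply] at h1 h2
    rw [show (fun N => ∑ n ∈ Finset.range N, (f n v) ^ 2)
        = fun N => S (P N v) v from (funext fun N => (h2 N).symm)]
    exact h1
  have hmono : ∀ v : X, Monotone fun N => ∑ n ∈ Finset.range N, (f n v) ^ 2 := by
    intro v N M hNM
    exact Finset.sum_le_sum_of_subset_of_nonneg
      (Finset.range_subset_range.2 hNM) (fun i _ _ => sq_nonneg _)
  have hle : ∀ (v : X) (N), ∑ n ∈ Finset.range N, (f n v) ^ 2 ≤ S v v := fun v N =>
    Monotone.ge_of_tendsto (hmono v) (hsq v) N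
  have hsummable : ∀ v : X, Summable fun n => (f n v) ^ 2 := fun v =>
    summable_of_sum_range_le (fun n => sq_nonneg _) (hle v)
  have htsum : ∀ v : X, ∑' n, (f n v) ^ 2 = S v v := fun v =>
    tendsto_nhds_unique (hsummable v).hasSum.tendsto_sum_nat (hsq v)
  have hSvv_le : ∀ v : X, S v v ≤ ‖S‖ * ‖v‖ ^ 2 := by
    intro v
    calc S v v ≤ ‖S v v‖ := le_abs_self _
      _ ≤ ‖S v‖ * ‖v‖ := (S v).le_opNorm v
      _ ≤ (‖S‖ * ‖v‖) * ‖v‖ := by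
          exact mul_le_mul_of_nonneg_right (S.le_opNorm v) (norm_nonneg _)
      _ = ‖S‖ * ‖v‖ ^ 2 := by ring
  have hmem : ∀ v : X, Memℓp (fun j => f j v) 2 := by
    intro v
    apply memℓp_gen
    simpa only [rpow_norm_two] using hsummable v
  -- the analysis operator
  let Af : X → lp (fun _ : ℕ => ℝ) 2 := fun v => ⟨fun j => f j v, hmem v⟩
  have hAfcoe : ∀ (v : X) (j : ℕ), (Af v : ∀ _ : ℕ, ℝ) j = f j v := fun v j => rfl
  have hAfle : ∀ v : X, ‖Af v‖ ≤ Real.sqrt ‖S‖ * ‖v‖ := by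
    intro v
    apply lp.norm_le_of_forall_sum_le (by norm_num)
      (mul_nonneg (Real.sqrt_nonneg _) (norm_nonneg _))
    intro s
    have h1 : ∑ i ∈ s, ‖(Af v : ∀ _ : ℕ, ℝ) i‖ ^ ((2 : ℝ≥0∞).toReal)
        = ∑ i ∈ s, (f i v) ^ 2 := by
      refine Finset.sum_congr rfl fun i _ => ?_
      rw [hAfcoe, rpow_norm_two]
    rw [h1]
    have h2 : ∑ i ∈ s, (f i v) ^ 2 ≤ S v v :=
      (htsum v) ▸ Summable.sum_le_tsum s (fun i _ => sq_nonneg _) (hsummable v)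
    have h3 : (Real.sqrt ‖S‖ * ‖v‖) ^ ((2 : ℝ≥0∞).toReal) = ‖S‖ * ‖v‖ ^ 2 := by
      rw [rpow_toReal_two, mul_pow, Real.sq_sqrt (norm_nonneg S)]
    rw [h3]
    exact h2.trans (hSvv_le v)
  let A₀ : X →ₗ[ℝ] lp (fun _ : ℕ => ℝ) 2 :=
    { toFun := Af
      map_add' := by
        intro u v
        apply lp.ext
        funext j
        simp only [hAfcoe, lp.coeFn_add, Pi.add_apply, hAfcoe, map_add]
      map_smul' := by
        intro c v
        apply lp.ext
        funext j
        simp only [hAfcoe, lp.coeFn_smul, Pi.smul_apply, map_smul, RingHom.id_apply,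
          smul_eq_mul] }
  let A : X →L[ℝ] lp (fun _ : ℕ => ℝ) 2 := A₀.mkContinuous (Real.sqrt ‖S‖) hAfle
  have hAcoe : ∀ (v : X) (j : ℕ), (A v : ∀ _ : ℕ, ℝ) j = f j v := fun v j => rfl
  -- the partial sums of the squares are bounded by `‖A v‖ ^ 2`
  have hsum_le_norm : ∀ (v : X) (N : ℕ),
      ∑ n ∈ Finset.range N, (f n v) ^ 2 ≤ ‖A v‖ ^ 2 := by
    intro v N
    have := lp.sum_rpow_le_norm_rpow (p := 2) (by norm_num) (A v) (Finset.range N)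
    simpa only [hAcoe, rpow_toReal_two, Real.norm_eq_abs, sq_abs] using this
  -- the dual frame coefficients are square-summable with bound `C ‖h‖ ^ 2`
  have hBsq : ∀ (h : (closedSpan fun n => S (x n))) (N : ℕ),
      ∑ n ∈ Finset.range N, (T (g n) h) ^ 2 ≤ C * ‖h‖ ^ 2 := by
    intro h N
    have h1 : Tendsto (fun N => T (∑ n ∈ Finset.range N, T (g n) h • g n) h) atTop
        (𝓝 (T h h)) := by
      have hc : Continuous fun φ : (closedSpan fun n => S (x n)) => T φ h :=
        (ContinuousLinearMap.apply ℝ ℝ h).continuous.comp T.continuous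
      exact (hc.tendsto h).comp (hT h)
    have h2 : ∀ M, T (∑ n ∈ Finset.range M, T (g n) h • g n) h
        = ∑ n ∈ Finset.range M, (T (g n) h) ^ 2 := by
      intro M
      rw [map_sum, ContinuousLinearMap.sum_apply]
      refine Finset.sum_congr rfl fun n _ => ?_
      rw [map_smul, ContinuousLinearMap.smul_apply, smul_eq_mul, sq]
    rw [show (fun N => T (∑ n ∈ Finset.range N, T (g n) h • g n) h)
        = fun N => ∑ n ∈ Finset.range N, (T (g n) h) ^ 2 from funext h2] at h1
    have hmono' : Monotone fun N => ∑ n ∈ Finset.range N, (T (g n) h) ^ 2 := by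
      intro N M hNM
      exact Finset.sum_le_sum_of_subset_of_nonneg
        (Finset.range_subset_range.2 hNM) (fun i _ _ => sq_nonneg _)
    have hle' : ∑ n ∈ Finset.range N, (T (g n) h) ^ 2 ≤ T h h :=
      Monotone.ge_of_tendsto hmono' h1 N
    refine hle'.trans ?_
    calc T h h ≤ ‖T h h‖ := le_abs_self _
      _ ≤ ‖T h‖ * ‖h‖ := hTh h
      _ ≤ (C * ‖h‖) * ‖h‖ :=
          mul_le_mul_of_nonneg_right (hT'op h) (norm_nonneg h)
      _ = C * ‖h‖ ^ 2 := by ring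
  -- pairing estimate: for h ∈ Y, |h(v)| ≤ √C ‖h‖ ‖A v‖
  have hpair : ∀ (h : (closedSpan fun n => S (x n))) (v : X),
      |(h : X →L[ℝ] ℝ) v| ≤ Real.sqrt C * ‖h‖ * ‖A v‖ := by
    intro h v
    have hcont : Continuous fun φ : (closedSpan fun n => S (x n)) => ((φ : X →L[ℝ] ℝ)) v := by
      exact (ContinuousLinearMap.apply ℝ ℝ v).continuous.comp continuous_subtype_val
    have h1 : Tendsto
        (fun N => (((∑ n ∈ Finset.range N, T (g n) h • g n : (closedSpan fun n => S (x n))) : X →L[ℝ] ℝ)) v)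
        atTop (𝓝 ((h : X →L[ℝ] ℝ) v)) := (hcont.tendsto h).comp (hT h)
    have h2 : ∀ N, (((∑ n ∈ Finset.range N, T (g n) h • g n : (closedSpan fun n => S (x n))) : X →L[ℝ] ℝ)) v
        = ∑ n ∈ Finset.range N, (T (g n) h) * (f n v) := by
      intro N
      have : ((∑ n ∈ Finset.range N, T (g n) h • g n : (closedSpan fun n => S (x n))) : X →L[ℝ] ℝ)
          = ∑ n ∈ Finset.range N, T (g n) h • ((g n : X →L[ℝ] ℝ)) := by
        push_cast
        rfl
      rw [this]
      rw [ContinuousLinearMap.sum_apply]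
      refine Finset.sum_congr rfl fun n _ => ?_
      rw [ContinuousLinearMap.smul_apply, smul_eq_mul, hg, hS]
    have hbound : ∀ N, |∑ n ∈ Finset.range N, (T (g n) h) * (f n v)|
        ≤ Real.sqrt C * ‖h‖ * ‖A v‖ := by
      intro N
      have hcs := Finset.sum_mul_sq_le_sq_mul_sq (Finset.range N)
        (fun n => T (g n) h) (fun n => f n v)
      have hb1 : (∑ n ∈ Finset.range N, (T (g n) h) ^ 2)
          * (∑ n ∈ Finset.range N, (f n v) ^ 2)
          ≤ (C * ‖h‖ ^ 2) * ‖A v‖ ^ 2 := by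
        apply mul_le_mul (hBsq h N) (hsum_le_norm v N)
          (Finset.sum_nonneg fun i _ => sq_nonneg _)
        exact mul_nonneg hC0 (sq_nonneg _)
      have hsq' : (∑ n ∈ Finset.range N, (T (g n) h) * (f n v)) ^ 2
          ≤ (C * ‖h‖ ^ 2) * ‖A v‖ ^ 2 := hcs.trans hb1
      have := Real.abs_le_sqrt hsq'
      refine this.trans (le_of_eq ?_)
      rw [Real.sqrt_mul (mul_nonneg hC0 (sq_nonneg _)), Real.sqrt_mul hC0,
        Real.sqrt_sq (norm_nonneg _), Real.sqrt_sq (norm_nonneg h)]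
    have habs : Tendsto (fun N => |∑ n ∈ Finset.range N, (T (g n) h) * (f n v)|) atTop
        (𝓝 |(h : X →L[ℝ] ℝ) v|) := by
      rw [show (fun N => |∑ n ∈ Finset.range N, (T (g n) h) * (f n v)|)
          = fun N => |(((∑ n ∈ Finset.range N, T (g n) h • g n : (closedSpan fun n => S (x n))) : X →L[ℝ] ℝ)) v|
          from funext fun N => by rw [h2]]
      exact h1.abs
    exact le_of_tendsto habs (Filter.Eventually.of_forall hbound)
  -- every functional on X satisfies the estimate
  have hψ : ∀ (ψ : X →L[ℝ] ℝ) (v : X),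
      |ψ v| ≤ Real.sqrt C * (K * ‖ψ‖) * ‖A v‖ := by
    intro ψ v
    set hN : ℕ → (closedSpan fun n => S (x n)) := fun N => ∑ n ∈ Finset.range N, ψ (x n) • g n with hNdef
    have hcoe : ∀ N w, ((hN N : X →L[ℝ] ℝ)) w = ψ (P N w) := by
      intro N w
      have h0 : ((hN N : X →L[ℝ] ℝ))
          = ∑ n ∈ Finset.range N, ψ (x n) • ((g n : X →L[ℝ] ℝ)) := by
        rw [hNdef]
        push_cast
        rfl
      rw [h0, ContinuousLinearMap.sum_apply, hPapply, map_sum]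
      refine Finset.sum_congr rfl fun n _ => ?_
      rw [ContinuousLinearMap.smul_apply, smul_eq_mul, hg, hS, map_smul, smul_eq_mul,
        mul_comm]
    have hnormhN : ∀ N, ‖hN N‖ ≤ K * ‖ψ‖ := by
      intro N
      have : ‖hN N‖ = ‖((hN N : X →L[ℝ] ℝ))‖ := rfl
      rw [this]
      apply ContinuousLinearMap.opNorm_le_bound _ (by positivity)
      intro w
      rw [hcoe]
      calc ‖ψ (P N w)‖ ≤ ‖ψ‖ * ‖P N w‖ := ψ.le_opNorm _
        _ ≤ ‖ψ‖ * (K * ‖w‖) := by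
            apply mul_le_mul_of_nonneg_left ((P N).le_opNorm w |>.trans ?_) (norm_nonneg ψ)
            exact mul_le_mul_of_nonneg_right (hK N) (norm_nonneg w)
        _ = K * ‖ψ‖ * ‖w‖ := by ring
    have hboundN : ∀ N, |ψ (P N v)| ≤ Real.sqrt C * (K * ‖ψ‖) * ‖A v‖ := by
      intro N
      rw [← hcoe N v]
      refine (hpair (hN N) v).trans ?_
      have := hnormhN N
      apply mul_le_mul_of_nonneg_right _ (norm_nonneg _)
      exact mul_le_mul_of_nonneg_left this (Real.sqrt_nonneg _)
    have htend : Tendsto (fun N => |ψ (P N v)|) atTop (𝓝 |ψ v|) :=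
      (((ψ.continuous.tendsto v).comp (hPtend v))).abs
    exact le_of_tendsto htend (Filter.Eventually.of_forall hboundN)
  -- A is bounded below
  set D : ℝ := Real.sqrt C * K + 1 with hDdef
  have hDpos : (0 : ℝ) < D := by positivity
  have hlow' : ∀ v : X, ‖v‖ ≤ D * ‖A v‖ := by
    intro v
    rcases eq_or_ne v 0 with rfl | hv
    · simp
    obtain ⟨ψ, hψ1, hψv⟩ := exists_dual_vector ℝ v (norm_ne_zero_iff.2 hv)
    have h1 := hψ ψ v
    rw [hψ1, mul_one] at h1
    have h2 : ‖v‖ ≤ |ψ v| := by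
      rw [hψv]
      simp [abs_of_nonneg (norm_nonneg v)]
    calc ‖v‖ ≤ Real.sqrt C * K * ‖A v‖ := h2.trans h1
      _ ≤ D * ‖A v‖ := by
          apply mul_le_mul_of_nonneg_right _ (norm_nonneg _)
          rw [hDdef]; linarith
  have hlow : ∀ v : X, D⁻¹ * ‖v‖ ≤ ‖A v‖ := by
    intro v
    rw [inv_mul_le_iff₀ hDpos]
    exact hlow' v
  refine ⟨A, hAcoe, ⟨D⁻¹, by positivity, hlow⟩, ?_⟩
  -- closed range and the isomorphism
  have hanti : AntilipschitzWith (⟨D, hDpos.le⟩ : NNReal) A :=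
    ContinuousLinearMap.antilipschitz_of_bound A hlow'
  have hclosed : IsClosed (Set.range A) := hanti.isClosed_range A.uniformContinuous
  have hrange_coe : ((LinearMap.range (A : X →ₗ[ℝ] lp (fun _ : ℕ => ℝ) 2) : Submodule ℝ (lp (fun _ : ℕ => ℝ) 2)) :
      Set (lp (fun _ : ℕ => ℝ) 2)) = Set.range A := by exact LinearMap.coe_range (A : X →ₗ[ℝ] lp (fun _ : ℕ => ℝ) 2)
  refine ⟨LinearMap.range (A : X →ₗ[ℝ] lp (fun _ : ℕ => ℝ) 2), by rw [hrange_coe]; exact hclosed, ?_⟩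
  haveI : CompleteSpace (LinearMap.range (A : X →ₗ[ℝ] lp (fun _ : ℕ => ℝ) 2) : Submodule ℝ (lp (fun _ : ℕ => ℝ) 2)) := by
    exact IsClosed.completeSpace_coe (hs := by rw [hrange_coe]; exact hclosed)
  let Ar : X →L[ℝ] (LinearMap.range (A : X →ₗ[ℝ] lp (fun _ : ℕ => ℝ) 2) : Submodule ℝ (lp (fun _ : ℕ => ℝ) 2)) :=
    A.codRestrict _ (fun v => LinearMap.mem_range_self _ v)
  have hker : LinearMap.ker (Ar : X →ₗ[ℝ] (LinearMap.range (A : X →ₗ[ℝ] lp (fun _ : ℕ => ℝ) 2))) = ⊥ := by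
    rw [LinearMap.ker_eq_bot']
    intro v hv
    have hAv : A v = 0 := by
      have : (Ar v : lp (fun _ : ℕ => ℝ) 2) = A v := rfl
      rw [← this, show Ar v = 0 from hv]; rfl
    have := hlow' v
    rw [hAv, norm_zero, mul_zero] at this
    exact norm_le_zero_iff.1 this
  have hrange : LinearMap.range (Ar : X →ₗ[ℝ] (LinearMap.range (A : X →ₗ[ℝ] lp (fun _ : ℕ => ℝ) 2))) = ⊤ := by
    rw [LinearMap.range_eq_top]
    rintro ⟨y, v, rfl⟩
    exact ⟨v, rfl⟩
  exact ⟨ContinuousLinearEquiv.ofBijective Ar hker hrange⟩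
end
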